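/- arXiv:2407.19665 — 9 statements merged into one kernel-verified Lean document; each statement's English description precedes it below -/
import Mathlib

section
/- Let A ∈ M_n(ℤ) with characteristic polynomial f(x) = x^n − c_{n−1}x^{n−1} − ⋯ − c_0, and suppose no root of f is a root of unity and that p is an odd prime with gcd(p, c_0) = 1. Let {u_k} be the linear recurrence u_{m+n} = c_{n−1}u_{m+n−1} + ⋯ + c_0 u_m with initial values u_0 = ⋯ = u_{n−2} = 0, u_{n−1} = 1, and let T_r denote the period of the sequence {u_k mod p^r}. Then there exists t ∈ ℕ such that T_1 = T_2 = ⋯ = T_t and T_k = p^{k−t} T_1 for all k > t. -/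
open Polynomial Finset

def MZD {n : ℕ} (d : ℤ) (X : Matrix (Fin n) (Fin n) ℤ) : Prop := ∀ i j, d ∣ X i j

namespace MZD
variable {n : ℕ} {d e : ℤ} {X Y : Matrix (Fin n) (Fin n) ℤ}
lemma mono (h : e ∣ d) (hX : MZD d X) : MZD e X := fun i j => h.trans (hX i j)
lemma sub (hX : MZD d X) (hY : MZD d Y) : MZD d (X - Y) := fun i j => by
  have := dvd_sub (hX i j) (hY i j); simpa [Matrix.sub_apply] using this
lemma mul_right (hX : MZD d X) (Y) : MZD d (X * Y) := fun i j => by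
  simp only [Matrix.mul_apply]
  exact Finset.dvd_sum fun l _ => (hX i l).mul_right _
lemma mul_left (hX : MZD d X) (Y) : MZD d (Y * X) := fun i j => by
  simp only [Matrix.mul_apply]
  exact Finset.dvd_sum fun l _ => (hX l j).mul_left _
lemma mul (hX : MZD d X) (hY : MZD e Y) : MZD (d * e) (X * Y) := fun i j => by
  simp only [Matrix.mul_apply]
  exact Finset.dvd_sum fun l _ => mul_dvd_mul (hX i l) (hY l j)
lemma pow (hX : MZD d X) : ∀ k, MZD (d ^ k) (X ^ k)
  | 0 => by simp only [pow_zero]; exact fun i j => one_dvd _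
  | (k+1) => by rw [pow_succ, pow_succ]; exact (pow hX k).mul hX
end MZD

section BIN
variable {n : ℕ} {p : ℕ}

lemma bin_main (hp : p.Prime) (hp3 : 3 ≤ p) {r : ℕ} (hr : 1 ≤ r)
    (X : Matrix (Fin n) (Fin n) ℤ) (h : MZD ((p:ℤ)^r) (X - 1)) :
    MZD ((p:ℤ)^(r+2)) (X ^ p - 1 - (p:ℤ) • (X - 1)) := by
  obtain ⟨q, hq⟩ : ∃ q, p = q + 2 := ⟨p - 2, by omega⟩
  set D : Matrix (Fin n) (Fin n) ℤ := X - 1 with hD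
  have hX : X = 1 + D := by rw [hD]; abel
  have hcomm : Commute (1 : Matrix (Fin n) (Fin n) ℤ) D := Commute.one_left D
  have hexp := hcomm.add_pow p
  rw [hq, Finset.sum_range_succ, Finset.sum_range_succ] at hexp
  have e1 : (1 : Matrix (Fin n) (Fin n) ℤ) ^ (q+2) * D ^ (q + 2 - (q + 2)) * ((q+2).choose (q+2) : Matrix (Fin n) (Fin n) ℤ) = 1 := by
    simp
  have e2 : (1 : Matrix (Fin n) (Fin n) ℤ) ^ (q+1) * D ^ (q + 2 - (q + 1)) * ((q+2).choose (q+1) : Matrix (Fin n) (Fin n) ℤ) = (p:ℤ) • D := by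
    have h1 : q + 2 - (q + 1) = 1 := by omega
    have h2 : (q+2).choose (q+1) = q + 2 := by
      rw [show q + 2 = (q+1) + 1 from rfl, Nat.choose_succ_self_right]
    rw [h1, h2, one_pow, pow_one, one_mul,
      ← (Nat.cast_commute (q+2) D).eq, ← nsmul_eq_mul, natCast_zsmul, hq]
  rw [e1, e2] at hexp
  have hXp : X ^ p - 1 - (p:ℤ) • (X - 1)
      = ∑ m ∈ range (q + 1), 1 ^ m * D ^ (q + 2 - m) * ((q+2).choose m : Matrix (Fin n) (Fin n) ℤ) := by
    rw [hq] at *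
    rw [← hX] at hexp
    rw [hexp, ← hD]
    abel
  rw [hXp]
  intro i j
  rw [Matrix.sum_apply]
  apply Finset.dvd_sum
  intro m hm
  simp only [Finset.mem_range] at hm
  simp only [one_pow, one_mul]
  rcases Nat.eq_zero_or_pos m with hm0 | hm0
  · subst hm0
    refine dvd_trans (pow_dvd_pow (p:ℤ) (show r+2 ≤ r*p by nlinarith)) ?_
    simp only [Nat.sub_zero, Nat.choose_zero_right, Nat.cast_one, mul_one]
    have h2 : q + 2 = p := hq.symm
    rw [h2]
    have : MZD (((p:ℤ)^r)^p) (D ^ p) := h.pow p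
    rw [← pow_mul] at this
    exact this i j
  · have hDm : MZD (((p:ℤ)^r)^(q+2-m)) (D ^ (q+2-m)) := h.pow _
    rw [← pow_mul] at hDm
    have hchn : p ∣ (q+2).choose m := by
      rw [← hq]; exact hp.dvd_choose_self (by omega) (by omega)
    have hchM : MZD (p:ℤ) (((q+2).choose m : Matrix (Fin n) (Fin n) ℤ)) := by
      intro i' j'
      rw [show (((q+2).choose m : ℕ) : Matrix (Fin n) (Fin n) ℤ)
          = Matrix.diagonal (fun _ => (((q+2).choose m : ℕ) : ℤ)) from rfl]
      rcases eq_or_ne i' j' with h' | h'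
      · simp [Matrix.diagonal_apply, h']
        exact_mod_cast Int.natCast_dvd_natCast.mpr hchn
      · simp [Matrix.diagonal_apply, h']
    have := hDm.mul hchM
    refine dvd_trans ?_ (this i j)
    rw [← pow_succ]
    refine pow_dvd_pow _ ?_
    have h2 : 2 ≤ q + 2 - m := by omega
    nlinarith

-- corollaries
lemma bin_dvd (hp : p.Prime) (hp3 : 3 ≤ p) {r : ℕ} (hr : 1 ≤ r)
    (X : Matrix (Fin n) (Fin n) ℤ) (h : MZD ((p:ℤ)^r) (X - 1)) :
    MZD ((p:ℤ)^(r+1)) (X ^ p - 1) := by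
  have h1 := bin_main hp hp3 hr X h
  have h2 : MZD ((p:ℤ)^(r+1)) ((p:ℤ) • (X - 1)) := by
    intro i j
    have := mul_dvd_mul_left (p:ℤ) (h i j)
    rw [pow_succ, mul_comm ((p:ℤ)^r)]
    simpa using this
  have h3 : X ^ p - 1 = (X ^ p - 1 - (p:ℤ) • (X - 1)) + (p:ℤ) • (X - 1) := by abel
  rw [h3]
  intro i j
  rw [Matrix.add_apply]
  exact dvd_add (h1.mono (pow_dvd_pow _ (by omega)) i j) (h2 i j)

lemma bin_not_dvd (hp : p.Prime) (hp3 : 3 ≤ p) {r : ℕ} (hr : 1 ≤ r)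
    (X : Matrix (Fin n) (Fin n) ℤ) (h : MZD ((p:ℤ)^r) (X - 1))
    (h' : ¬ MZD ((p:ℤ)^(r+1)) (X - 1)) :
    ¬ MZD ((p:ℤ)^(r+2)) (X ^ p - 1) := by
  intro hcon
  apply h'
  have h1 := bin_main hp hp3 hr X h
  have h2 : MZD ((p:ℤ)^(r+2)) ((p:ℤ) • (X - 1)) := by
    have : (p:ℤ) • (X - 1) = (X ^ p - 1) - (X ^ p - 1 - (p:ℤ) • (X - 1)) := by abel
    rw [this]
    exact hcon.sub h1
  intro i j
  have h3 := h2 i j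
  simp only [Matrix.smul_apply, smul_eq_mul] at h3
  have hpne : (p:ℤ) ≠ 0 := by exact_mod_cast hp.ne_zero
  rw [show r + 2 = (r+1) + 1 from rfl, pow_succ, mul_comm ((p:ℤ)^(r+1))] at h3
  exact (mul_dvd_mul_iff_left hpne).mp h3
end BIN

section Comp
variable {n : ℕ}

/-- companion matrix of the recurrence -/
def cmpM (c : Fin n → ℤ) : Matrix (Fin n) (Fin n) ℤ :=
  Matrix.of fun i j => if (i:ℕ)+1 = n then c j else if (i:ℕ)+1 = (j:ℕ) then 1 else 0

/-- state vector -/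
def stv (u : ℕ → ℤ) (m : ℕ) : Fin n → ℤ := fun i => u (m + i)

lemma cmpM_step (c : Fin n → ℤ) (u : ℕ → ℤ)
    (hrec : ∀ m : ℕ, u (m + n) = ∑ i : Fin n, c i * u (m + i)) (m : ℕ) :
    (cmpM c).mulVec (stv u m) = stv u (m+1) := by
  funext i
  rcases eq_or_ne ((i:ℕ)+1) n with hi | hi
  · have : stv u (m+1) i = u (m + n) := by
      unfold stv; congr 1; omega
    rw [this, hrec m, Matrix.mulVec]
    simp only [cmpM, Matrix.of_apply, hi, if_true, dotProduct, stv]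
  · have hlt : (i:ℕ) + 1 < n := by have := i.2; omega
    rw [Matrix.mulVec]
    have : stv u (m+1) i = u (m + ((i:ℕ)+1)) := by
      unfold stv; congr 1; omega
    rw [this, dotProduct]
    rw [Finset.sum_eq_single (⟨(i:ℕ)+1, hlt⟩ : Fin n)]
    · simp [cmpM, hi, stv]
    · intro b _ hb
      have hbne : (i:ℕ)+1 ≠ (b:ℕ) := by
        intro hc; apply hb; exact Fin.ext hc.symm
      simp [cmpM, hi, hbne]
    · intro hb; exact absurd (Finset.mem_univ _) hb

lemma cmpM_iter (c : Fin n → ℤ) (u : ℕ → ℤ)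
    (hrec : ∀ m : ℕ, u (m + n) = ∑ i : Fin n, c i * u (m + i)) :
    ∀ k m, ((cmpM c)^k).mulVec (stv u m) = stv u (m+k)
  | 0, m => by simp [Matrix.one_mulVec]
  | (k+1), m => by
      rw [pow_succ', ← Matrix.mulVec_mulVec, cmpM_iter c u hrec k m,
        cmpM_step c u hrec (m+k), show m + k + 1 = m + (k+1) from by omega]
end Comp

section VM
variable {n : ℕ}

def Vmat (u : ℕ → ℤ) : Matrix (Fin n) (Fin n) ℤ :=
  Matrix.of fun i j => u ((j:ℕ) + i)

lemma Vmat_col (u : ℕ → ℤ) (j : Fin n) :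
    (fun l => Vmat u l j) = stv u (j:ℕ) := by
  funext l; simp [Vmat, stv]

lemma Vmat_unit (hn : 0 < n) (u : ℕ → ℤ)
    (hinit : (∀ i : ℕ, i < n - 1 → u i = 0) ∧ u (n - 1) = 1) :
    IsUnit (Vmat (n := n) u).det := by
  have htri : ((Vmat (n := n) u).submatrix (Fin.revPerm) id).BlockTriangular id := by
    intro i j hij
    simp only [Matrix.submatrix_apply, id] at hij ⊢
    have hi := i.2
    have : (j:ℕ) + (Fin.revPerm i : ℕ) < n - 1 := by
      simp only [Fin.revPerm_apply, Fin.val_rev]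
      omega
    exact hinit.1 _ this
  have hdet1 : ((Vmat (n := n) u).submatrix (Fin.revPerm) id).det = 1 := by
    rw [Matrix.det_of_upperTriangular htri]
    apply Finset.prod_eq_one
    intro i _
    simp only [Matrix.submatrix_apply, id, Vmat, Matrix.of_apply, Fin.revPerm_apply, Fin.val_rev]
    have hi := i.2
    have : (i:ℕ) + (n - ((i:ℕ) + 1)) = n - 1 := by omega
    rw [this, hinit.2]
  have hperm := Matrix.det_permute (Fin.revPerm) (Vmat (n := n) u)
  rw [hperm] at hdet1
  exact IsUnit.of_mul_eq_one _ (by rw [mul_comm]; exact hdet1)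
end VM

section Equiv
variable {n : ℕ}

lemma mzd_to_seq (hn : 0 < n) (c : Fin n → ℤ) (u : ℕ → ℤ)
    (hrec : ∀ m : ℕ, u (m + n) = ∑ i : Fin n, c i * u (m + i))
    (d : ℤ) (k : ℕ) (h : MZD d ((cmpM c)^k - 1)) :
    ∀ m, d ∣ u (m + k) - u m := by
  intro m
  have key : u (m + k) - u m = (((cmpM c)^k - 1).mulVec (stv u m)) ⟨0, hn⟩ := by
    rw [Matrix.sub_mulVec, Matrix.one_mulVec, cmpM_iter c u hrec]
    simp [stv]
  rw [key, Matrix.mulVec, dotProduct]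
  exact Finset.dvd_sum fun j _ => (h _ j).mul_right _

lemma seq_to_mzd (hn : 0 < n) (c : Fin n → ℤ) (u : ℕ → ℤ)
    (hrec : ∀ m : ℕ, u (m + n) = ∑ i : Fin n, c i * u (m + i))
    (hinit : (∀ i : ℕ, i < n - 1 → u i = 0) ∧ u (n - 1) = 1)
    (d : ℤ) (k : ℕ) (h : ∀ m, d ∣ u (m + k) - u m) :
    MZD d ((cmpM c)^k - 1) := by
  have h1 : MZD d (((cmpM c)^k - 1) * Vmat u) := by
    intro i j
    rw [Matrix.mul_apply]
    have key : (∑ l, ((cmpM c)^k - 1) i l * Vmat u l j)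
        = (((cmpM c)^k - 1).mulVec (stv u (j:ℕ))) i := by
      rw [Matrix.mulVec, dotProduct]
      exact Finset.sum_congr rfl fun l _ => by simp [Vmat, stv]
    rw [key, Matrix.sub_mulVec, Matrix.one_mulVec, cmpM_iter c u hrec]
    have : (stv (n:=n) u ((j:ℕ) + k) - stv (n:=n) u (j:ℕ)) i = u (((j:ℕ) + (i:ℕ)) + k) - u ((j:ℕ) + (i:ℕ)) := by
      simp only [Pi.sub_apply, stv]
      congr 2
      omega
    rw [this]
    exact h _
  have h2 : (cmpM c)^k - 1 = (((cmpM c)^k - 1) * Vmat u) * (Vmat u)⁻¹ := by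
    rw [Matrix.mul_assoc, Matrix.mul_nonsing_inv _ (Vmat_unit hn u hinit), Matrix.mul_one]
  rw [h2]
  exact h1.mul_right _
end Equiv

section CX

lemma no_integer_period (n : ℕ) (hn : 0 < n) (c : Fin n → ℤ) (u : ℕ → ℤ)
    (hrec : ∀ m : ℕ, u (m + n) = ∑ i : Fin n, c i * u (m + i))
    (hinit : (∀ i : ℕ, i < n - 1 → u i = 0) ∧ u (n - 1) = 1)
    (z : ℂ) (hz : z ^ n = ∑ i : Fin n, (c i : ℂ) * z ^ (i:ℕ))
    (Tp : ℕ) (hper : ∀ m, u (m + Tp) = u m) :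
    z ^ Tp = 1 := by
  set c' : ℕ → ℂ := fun i => if h : i < n then (c ⟨i, h⟩ : ℂ) else 0 with hc'
  set ψ : ℕ → ℂ := fun k => z ^ k - ∑ i ∈ range k, c' (n-1-i) * z ^ (k-1-i) with hψ
  set g : ℕ → ℂ := fun m => ∑ j ∈ range n, ψ (n-1-j) * (u (m+j) : ℂ) with hg
  have hψ0 : ψ 0 = 1 := by simp [hψ]
  have hψrec : ∀ k, ψ (k+1) = z * ψ k - c' (n-1-k) := by
    intro k
    have hsum : ∀ i ∈ range k, c' (n-1-i) * z ^ (k-i) = z * (c' (n-1-i) * z ^ (k-1-i)) := by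
      intro i hi
      rw [Finset.mem_range] at hi
      rw [show k - i = (k-1-i)+1 by omega, pow_succ]
      ring
    simp only [hψ, Finset.sum_range_succ,
      show ∀ i, k + 1 - 1 - i = k - i from fun i => by omega]
    rw [Finset.sum_congr rfl hsum, ← Finset.mul_sum, Nat.sub_self, pow_zero, mul_one, pow_succ]
    ring
  have hψn : ψ n = 0 := by
    have hrefl : ∑ i ∈ range n, c' (n-1-i) * z ^ (n-1-i) = ∑ i ∈ range n, c' i * z ^ i :=
      Finset.sum_range_reflect (fun t => c' t * z ^ t) n
    have hfin : ∑ i ∈ range n, c' i * z ^ i = ∑ i : Fin n, (c i : ℂ) * z ^ (i:ℕ) := by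
      rw [← Fin.sum_univ_eq_sum_range]
      refine Finset.sum_congr rfl fun i _ => ?_
      simp [hc', i.2]
    simp only [hψ, hrefl, hfin, hz, sub_self]
  have hgrec : ∀ m, z * g m = g (m+1) := by
    intro m
    have hzψ : ∀ j ∈ range n, z * (ψ (n-1-j) * (u (m+j) : ℂ))
        = ψ (n-j) * (u (m+j) : ℂ) + c' j * (u (m+j) : ℂ) := by
      intro j hj
      rw [Finset.mem_range] at hj
      have := hψrec (n-1-j)
      rw [show n-1-j+1 = n-j by omega, show n-1-(n-1-j) = j by omega] at this
      rw [eq_sub_iff_add_eq] at this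
      linear_combination (u (m+j) : ℂ) * this.symm
    have hB : ∑ j ∈ range n, c' j * (u (m+j) : ℂ) = (u (m+n) : ℂ) := by
      rw [hrec m]
      push_cast
      rw [← Fin.sum_univ_eq_sum_range]
      refine Finset.sum_congr rfl fun i _ => ?_
      simp [hc', i.2]
    have hn1 : n - 1 + 1 = n := by omega
    have hA : ∑ j ∈ range n, ψ (n-j) * (u (m+j) : ℂ)
        = ∑ j ∈ range (n-1), ψ (n-1-j) * (u ((m+1)+j) : ℂ) := by
      have hsr := Finset.sum_range_succ' (fun j => ψ (n-j) * (u (m+j) : ℂ)) (n-1)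
      rw [hn1] at hsr
      rw [hsr]
      have h0 : ψ (n - 0) * (u (m+0) : ℂ) = 0 := by
        rw [Nat.sub_zero, hψn]; ring
      rw [h0, add_zero]
      refine Finset.sum_congr rfl fun j hj => ?_
      rw [Finset.mem_range] at hj
      rw [show n - (j+1) = n-1-j by omega, show m + (j+1) = (m+1)+j by omega]
    have hg1 : g (m+1) = ∑ j ∈ range (n-1), ψ (n-1-j) * (u ((m+1)+j) : ℂ) + (u (m+n) : ℂ) := by
      have hsr := Finset.sum_range_succ (fun j => ψ (n-1-j) * (u ((m+1)+j) : ℂ)) (n-1)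
      rw [hn1] at hsr
      simp only [hg]
      rw [hsr, show n-1-(n-1) = 0 by omega, hψ0, one_mul, show m+1+(n-1) = m+n by omega]
    calc z * g m = ∑ j ∈ range n, z * (ψ (n-1-j) * (u (m+j) : ℂ)) := by
            simp only [hg, Finset.mul_sum]
      _ = ∑ j ∈ range n, (ψ (n-j) * (u (m+j) : ℂ) + c' j * (u (m+j) : ℂ)) :=
            Finset.sum_congr rfl hzψ
      _ = (∑ j ∈ range n, ψ (n-j) * (u (m+j) : ℂ)) + ∑ j ∈ range n, c' j * (u (m+j) : ℂ) :=
            Finset.sum_add_distrib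
      _ = g (m+1) := by rw [hA, hB, hg1]
  have hg0 : g 0 = 1 := by
    simp only [hg]
    rw [Finset.sum_eq_single_of_mem (n-1) (Finset.mem_range.mpr (by omega))]
    · rw [show n-1-(n-1) = 0 by omega, hψ0, zero_add, hinit.2]
      simp
    · intro j hj hne
      rw [Finset.mem_range] at hj
      rw [zero_add, hinit.1 j (by omega)]
      simp
  have hgpow : ∀ m, g m = z ^ m := by
    intro m
    induction m with
    | zero => simpa using hg0
    | succ k ih => rw [← hgrec k, ih, pow_succ]; ring
  have hgT : g Tp = g 0 := by
    simp only [hg]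
    refine Finset.sum_congr rfl fun j _ => ?_
    rw [show Tp + j = j + Tp by omega, hper j, zero_add]
  rw [hgpow Tp, hgpow 0, pow_zero] at hgT
  exact hgT
end CX

section PN

lemma period_nonempty (n : ℕ) (hn : 0 < n) (c : Fin n → ℤ) (u : ℕ → ℤ)
    (hrec : ∀ m : ℕ, u (m + n) = ∑ i : Fin n, c i * u (m + i))
    (p : ℕ) (hp : p.Prime) (hpc : ¬(p : ℤ) ∣ c ⟨0, hn⟩) (r : ℕ) :
    ∃ k, 0 < k ∧ ∀ m, (p:ℤ)^r ∣ u (m + k) - u m := by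
  have hcop : IsCoprime ((p:ℤ)^r) (c ⟨0, hn⟩) :=
    ((Prime.coprime_iff_not_dvd (Nat.prime_iff_prime_int.mp hp)).mpr hpc).pow_left
  have hcast : ((p^r : ℕ) : ℤ) = (p:ℤ)^r := by push_cast; ring
  -- backward step
  have bstep : ∀ (k : ℕ) (m : ℕ),
      (∀ i : ℕ, 1 ≤ i → i ≤ n → (p:ℤ)^r ∣ u ((m+i) + k) - u (m+i)) →
      (p:ℤ)^r ∣ u (m + k) - u m := by
    intro k m hyp
    have key : (c ⟨0,hn⟩) * (u (m+k) - u m)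
        = (u ((m+n)+k) - u (m+n))
          - ∑ i ∈ Finset.univ.erase (⟨0,hn⟩ : Fin n), c i * (u ((m+(i:ℕ))+k) - u (m+(i:ℕ))) := by
      have h3 : u ((m+n)+k) - u (m+n)
          = ∑ i : Fin n, c i * (u ((m+(i:ℕ))+k) - u (m+(i:ℕ))) := by
        rw [show (m+n)+k = (m+k)+n by omega, hrec (m+k), hrec m, ← Finset.sum_sub_distrib]
        refine Finset.sum_congr rfl fun i _ => ?_
        rw [show (m+k)+(i:ℕ) = (m+(i:ℕ))+k by omega, mul_sub]
      rw [h3, ← Finset.sum_erase_add _ _ (Finset.mem_univ (⟨0,hn⟩ : Fin n))]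
      simp only [show ((⟨0,hn⟩ : Fin n) : ℕ) = 0 from rfl, Nat.add_zero]
      ring
    have hdvd : (p:ℤ)^r ∣ (c ⟨0,hn⟩) * (u (m+k) - u m) := by
      rw [key]
      refine dvd_sub (by simpa using hyp n hn le_rfl) (Finset.dvd_sum fun i hi => ?_)
      have hi1 : 1 ≤ (i:ℕ) := by
        rcases Finset.mem_erase.mp hi with ⟨hne, _⟩
        have : (i:ℕ) ≠ 0 := fun hc => hne (Fin.ext hc)
        omega
      exact (hyp (i:ℕ) hi1 (le_of_lt i.2)).mul_left _
    exact hcop.dvd_of_dvd_mul_left hdvd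
  -- pigeonhole
  haveI : NeZero (p ^ r) := ⟨pow_ne_zero r hp.ne_zero⟩
  obtain ⟨a0, b0, hne, heq⟩ := Finite.exists_ne_map_eq_of_infinite
    (fun m : ℕ => (fun i : Fin n => ((u (m + i) : ZMod (p ^ r)))))
  -- reduce to ordered case
  have main : ∀ a b : ℕ, a < b →
      (∀ i : Fin n, ((u (a + i) : ZMod (p ^ r))) = ((u (b + i) : ZMod (p ^ r)))) →
      ∃ k, 0 < k ∧ ∀ m, (p:ℤ)^r ∣ u (m + k) - u m := by
    intro a b hab hfab
    set k := b - a with hk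
    have hk0 : 0 < k := by omega
    have fwd : ∀ s, (p:ℤ)^r ∣ u (b + s) - u (a + s) := by
      intro s
      induction s using Nat.strong_induction_on with
      | _ s ih =>
        rcases lt_or_ge s n with hs | hs
        · have h1 := hfab ⟨s, hs⟩
          simp only [Fin.val_mk] at h1
          have h2 := Int.ModEq.dvd ((ZMod.intCast_eq_intCast_iff _ _ _).mp h1)
          rwa [hcast] at h2
        · rw [show b + s = (b+(s-n)) + n by omega, show a + s = (a+(s-n)) + n by omega,
            hrec (b+(s-n)), hrec (a+(s-n)), ← Finset.sum_sub_distrib]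
          refine Finset.dvd_sum fun i _ => ?_
          rw [show (b+(s-n))+(i:ℕ) = b + ((s-n)+(i:ℕ)) by omega,
            show (a+(s-n))+(i:ℕ) = a + ((s-n)+(i:ℕ)) by omega, ← mul_sub]
          exact (ih ((s-n)+(i:ℕ)) (by have := i.2; omega)).mul_left _
    have down : ∀ j m, a ≤ m + j → (p:ℤ)^r ∣ u (m + k) - u m := by
      intro j
      induction j with
      | zero =>
        intro m hm
        simp only [Nat.add_zero] at hm
        have h1 := fwd (m - a)
        rwa [show b + (m-a) = m + k by omega, show a + (m-a) = m by omega] at h1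
      | succ j ih =>
        intro m hm
        rcases le_or_gt a (m + j) with h | h
        · exact ih m h
        · exact bstep k m fun i h1 h2 => ih (m+i) (by omega)
    exact ⟨k, hk0, fun m => down a m (by omega)⟩
  rcases hne.lt_or_gt with h | h
  · exact main a0 b0 h (fun i => congrFun heq i)
  · exact main b0 a0 h (fun i => (congrFun heq i).symm)
end PN

/-- Let `A ∈ M_n(ℤ)` have characteristic polynomial
`f(x) = x^n - c_{n-1}x^{n-1} - ⋯ - c_0`, no root of which (in `ℂ`) is a root
of unity, and let `p` be an odd prime not dividing `c_0`. Let `u` be the linear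
recurrence induced by `A` with initial values `0, …, 0, 1`, and let `T r` be
the minimal period of `u mod p^r`. Then there is `t` with
`T 1 = T 2 = ⋯ = T t` and `T k = p^(k-t) * T 1` for all `k > t`. -/
theorem stmt_6 (n : ℕ) (hn : 0 < n) (A : Matrix (Fin n) (Fin n) ℤ)
    (c : Fin n → ℤ)
    (hchar : A.charpoly = X ^ n - ∑ i : Fin n, C (c i) * X ^ (i : ℕ))
    (hroots : ∀ z : ℂ, (A.charpoly.map (Int.castRingHom ℂ)).IsRoot z →
      ∀ m : ℕ, 0 < m → z ^ m ≠ 1)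
    (p : ℕ) (hp : p.Prime) (hodd : Odd p) (hpc : ¬(p : ℤ) ∣ c ⟨0, hn⟩)
    (u : ℕ → ℤ)
    (hrec : ∀ m : ℕ, u (m + n) = ∑ i : Fin n, c i * u (m + i))
    (hinit : (∀ i : ℕ, i < n - 1 → u i = 0) ∧ u (n - 1) = 1)
    (T : ℕ → ℕ)
    (hT : ∀ r : ℕ, 1 ≤ r →
      T r = sInf {k : ℕ | 0 < k ∧ ∀ m : ℕ, ((u (m + k) : ZMod (p ^ r)) = (u m : ZMod (p ^ r)))}) :
    ∃ t : ℕ, 0 < t ∧ (∀ r : ℕ, 1 ≤ r → r ≤ t → T r = T 1) ∧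
      ∀ k : ℕ, t < k → T k = p ^ (k - t) * T 1 := by
  classical
  have hp3 : 3 ≤ p := by
    rcases hodd with ⟨w, hw⟩
    have := hp.two_le
    omega
  set S : ℕ → Set ℕ := fun r => {k | 0 < k ∧ ∀ m, (p:ℤ)^r ∣ u (m+k) - u m} with hSdef
  have hcast : ∀ r : ℕ, ((p^r : ℕ) : ℤ) = (p:ℤ)^r := fun r => by push_cast; ring
  have hTr : ∀ r, 1 ≤ r → T r = sInf (S r) := by
    intro r hr
    rw [hT r hr]
    congr 1
    ext k
    simp only [Set.mem_setOf_eq, hSdef]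
    constructor
    · rintro ⟨h1, h2⟩
      refine ⟨h1, fun m => ?_⟩
      have h3 := Int.ModEq.dvd ((ZMod.intCast_eq_intCast_iff _ _ _).mp (h2 m))
      rw [hcast] at h3
      exact (dvd_sub_comm).mp h3
    · rintro ⟨h1, h2⟩
      refine ⟨h1, fun m => ?_⟩
      refine (ZMod.intCast_eq_intCast_iff _ _ _).mpr ?_
      refine (Int.modEq_iff_dvd.mpr ?_)
      rw [hcast]
      exact (dvd_sub_comm).mp (h2 m)
  have hne : ∀ r : ℕ, (S r).Nonempty := fun r => by
    obtain ⟨k, hk0, hk⟩ := period_nonempty n hn c u hrec p hp hpc r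
    exact ⟨k, hk0, hk⟩
  have hmem : ∀ r, 1 ≤ r → T r ∈ S r := fun r hr => by
    rw [hTr r hr]; exact Nat.sInf_mem (hne r)
  have hposT : ∀ r, 1 ≤ r → 0 < T r := fun r hr => (hmem r hr).1
  have hmin : ∀ r, 1 ≤ r → ∀ k ∈ S r, T r ≤ k := fun r hr k hk => by
    rw [hTr r hr]; exact Nat.sInf_le hk
  have hsub : ∀ r k l, k ∈ S r → l ∈ S r → l < k → (k - l) ∈ S r := by
    intro r k l hk hl hlk
    refine ⟨by omega, fun m => ?_⟩
    have h1 := hk.2 m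
    have h2 := hl.2 (m + (k - l))
    rw [show m + (k-l) + l = m + k by omega] at h2
    have h3 := dvd_sub h1 h2
    rwa [show (u (m+k) - u m) - (u (m+k) - u (m+(k-l))) = u (m+(k-l)) - u m from by ring] at h3
  have hdvdT : ∀ r, 1 ≤ r → ∀ k, k ∈ S r → T r ∣ k := by
    intro r hr k
    induction k using Nat.strong_induction_on with
    | _ k ih =>
      intro hk
      have hTk : T r ≤ k := hmin r hr k hk
      rcases eq_or_lt_of_le hTk with he | hlt
      · exact he ▸ dvd_refl _
      · have h1 : k - T r ∈ S r := hsub r k (T r) hk (hmem r hr) hlt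
        have h2 := ih (k - T r) (by have := hposT r hr; omega) h1
        rw [show k = (k - T r) + T r from by omega]
        exact dvd_add h2 (dvd_refl _)
  have hSub : ∀ r, S (r+1) ⊆ S r := by
    intro r k hk
    exact ⟨hk.1, fun m => dvd_trans (pow_dvd_pow _ (by omega)) (hk.2 m)⟩
  have hdvd2 : ∀ r, 1 ≤ r → T r ∣ T (r+1) :=
    fun r hr => hdvdT r hr _ (hSub r (hmem (r+1) (by omega)))
  have hmzd : ∀ r, ∀ k, k ∈ S r → MZD ((p:ℤ)^r) ((cmpM c)^k - 1) :=
    fun r k hk => seq_to_mzd hn c u hrec hinit _ k hk.2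
  have hmzd' : ∀ r k, 0 < k → MZD ((p:ℤ)^r) ((cmpM c)^k - 1) → k ∈ S r :=
    fun r k hk0 h => ⟨hk0, mzd_to_seq hn c u hrec _ k h⟩
  have hmul : ∀ r, 1 ≤ r → p * T r ∈ S (r+1) := by
    intro r hr
    have h1 := hmzd r (T r) (hmem r hr)
    have h2 := bin_dvd hp hp3 hr _ h1
    rw [← pow_mul] at h2
    refine hmzd' (r+1) _ (by have := hposT r hr; have := hp.pos; positivity) ?_
    rw [show p * T r = T r * p from by ring]
    exact h2
  have hTmul : ∀ r, 1 ≤ r → T (r+1) ∣ p * T r :=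
    fun r hr => hdvdT (r+1) (by omega) _ (hmul r hr)
  have hdich : ∀ r, 1 ≤ r → T (r+1) = T r ∨ T (r+1) = p * T r := by
    intro r hr
    obtain ⟨d, hd⟩ := hdvd2 r hr
    have h1 : T r * d ∣ T r * p := by
      rw [← hd, mul_comm (T r) p]
      exact hTmul r hr
    have h2 : d ∣ p := (Nat.mul_dvd_mul_iff_left (hposT r hr)).mp h1
    rcases (Nat.Prime.eq_one_or_self_of_dvd hp d h2) with h3 | h3
    · left; rw [hd, h3, mul_one]
    · right; rw [hd, h3, mul_comm]
  have hpers : ∀ r, 1 ≤ r → T (r+1) ≠ T r → (T (r+2) = p * T (r+1) ∧ T (r+2) ≠ T (r+1)) := by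
    intro r hr hne'
    have hTr1 : T (r+1) = p * T r := (hdich r hr).resolve_left hne'
    have hnz : ¬ MZD ((p:ℤ)^(r+1)) ((cmpM c)^(T r) - 1) := by
      intro hcon
      have h0 : T r ∈ S (r+1) := hmzd' (r+1) _ (hposT r hr) hcon
      have h1 := hmin (r+1) (by omega) _ h0
      have h2 := Nat.le_of_dvd (hposT (r+1) (by omega)) (hdvd2 r hr)
      exact hne' (le_antisymm h1 h2)
    have hnot2 : ¬ MZD ((p:ℤ)^(r+2)) ((cmpM c)^(T r * p) - 1) := by
      have h4 := bin_not_dvd hp hp3 hr _ (hmzd r (T r) (hmem r hr)) hnz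
      rwa [← pow_mul] at h4
    have hne2 : T (r+2) ≠ T (r+1) := by
      intro hcon
      have h1 : T (r+2) ∈ S (r+2) := hmem (r+2) (by omega)
      rw [hcon, hTr1] at h1
      have h5 := hmzd (r+2) _ h1
      rw [show p * T r = T r * p from by ring] at h5
      exact hnot2 h5
    exact ⟨(hdich (r+1) (by omega)).resolve_left hne2, hne2⟩
  have hex : ∃ r, 1 ≤ r ∧ T (r+1) ≠ T r := by
    by_contra hcon
    push_neg at hcon
    have hconst : ∀ r, 1 ≤ r → T r = T 1 := by
      intro r
      induction r with
      | zero => omega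
      | succ j ih =>
        intro _
        rcases Nat.eq_zero_or_pos j with hj | hj
        · subst hj; rfl
        · rw [hcon j hj]
          exact ih hj
    have hM1 : (cmpM c)^(T 1) = 1 := by
      have hzero : (cmpM c)^(T 1) - 1 = 0 := by
        ext i j
        by_contra ha
        set a := ((cmpM c)^(T 1) - 1) i j with hadef
        have ha' : a ≠ 0 := by simpa [hadef] using ha
        have h1 : (p:ℤ)^(a.natAbs) ∣ a := by
          have hTm : T 1 ∈ S a.natAbs := by
            rcases Nat.eq_zero_or_pos a.natAbs with h0 | h0
            · exact absurd (Int.natAbs_eq_zero.mp h0) ha'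
            · rw [← hconst a.natAbs h0]; exact hmem a.natAbs h0
          exact hmzd a.natAbs _ hTm i j
        have h3 : (p:ℤ)^(a.natAbs) ≤ |a| := Int.le_of_dvd (abs_pos.mpr ha') ((dvd_abs _ _).mpr h1)
        have h4 : (p:ℕ)^(a.natAbs) ≤ a.natAbs := by
          have : ((p^a.natAbs : ℕ) : ℤ) ≤ (a.natAbs : ℤ) := by
            rw [hcast]
            rwa [Int.abs_eq_natAbs] at h3
          exact_mod_cast this
        have h5 := Nat.lt_pow_self (n := a.natAbs) hp.one_lt
        omega
      rwa [sub_eq_zero] at hzero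
    have hper : ∀ m, u (m + T 1) = u m := by
      intro m
      have h2 := cmpM_iter c u hrec (T 1) m
      rw [hM1, Matrix.one_mulVec] at h2
      have h3 := congrFun h2 ⟨0, hn⟩
      simpa [stv] using h3.symm
    have hdeg : 0 < (A.charpoly.map (Int.castRingHom ℂ)).degree := by
      have hmono : (A.charpoly.map (Int.castRingHom ℂ)).Monic :=
        (A.charpoly_monic).map _
      have hnd : (A.charpoly.map (Int.castRingHom ℂ)).natDegree = n := by
        rw [(A.charpoly_monic).natDegree_map, A.charpoly_natDegree_eq_dim, Fintype.card_fin]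
      rw [← Polynomial.natDegree_pos_iff_degree_pos, hnd]
      exact hn
    obtain ⟨z, hz⟩ := Complex.exists_root hdeg
    have hzeq : z ^ n = ∑ i : Fin n, (c i : ℂ) * z ^ (i:ℕ) := by
      have hz' := hz
      rw [hchar] at hz'
      simp only [Polynomial.IsRoot, Polynomial.map_sub, Polynomial.map_pow, Polynomial.map_X,
        Polynomial.map_sum, Polynomial.map_mul, Polynomial.map_C, Polynomial.eval_sub,
        Polynomial.eval_pow, Polynomial.eval_X, Polynomial.eval_finset_sum,
        Polynomial.eval_mul, Polynomial.eval_C, Polynomial.map_intCast,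
        Polynomial.eval_intCast, eq_intCast] at hz'
      rw [sub_eq_zero] at hz'
      exact_mod_cast hz'
    have hfin := no_integer_period n hn c u hrec hinit z hzeq (T 1) hper
    exact hroots z hz (T 1) (hposT 1 le_rfl) hfin
  set G : Set ℕ := {r | 1 ≤ r ∧ T (r+1) ≠ T r} with hGdef
  have hGne : G.Nonempty := hex
  set t := sInf G with ht
  have htmem : t ∈ G := Nat.sInf_mem hGne
  have ht1 : 1 ≤ t := htmem.1
  have hflat : ∀ r, 1 ≤ r → r ≤ t → T r = T 1 := by
    intro r
    induction r with
    | zero => omega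
    | succ j ih =>
      intro hr hrt
      rcases Nat.eq_zero_or_pos j with hj | hj
      · subst hj; rfl
      · have hjt : j < t := by omega
        have hjG : j ∉ G := Nat.notMem_of_lt_sInf hjt
        have hTj : T (j+1) = T j := by
          by_contra hc
          exact hjG ⟨hj, hc⟩
        rw [hTj]
        exact ih hj (by omega)
  refine ⟨t, by omega, hflat, ?_⟩
  have hgrow : ∀ j, T (t+1+j) = p^(j+1) * T 1 ∧ T (t+1+j) ≠ T (t+j) := by
    intro j
    induction j with
    | zero =>
      have h1 : T (t+1) = p * T t := (hdich t ht1).resolve_left htmem.2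
      have h2 : T t = T 1 := hflat t ht1 le_rfl
      constructor
      · rw [show t+1+0 = t+1 from rfl, h1, h2, pow_one]
      · simpa using htmem.2
    | succ j ih =>
      have hstep := hpers (t+j) (by omega) (by
        rw [show (t+j)+1 = t+1+j from by omega]
        exact ih.2)
      constructor
      · rw [show t+1+(j+1) = (t+j)+2 from by omega, hstep.1,
          show (t+j)+1 = t+1+j from by omega, ih.1, pow_succ]
        ring
      · rw [show t+1+(j+1) = (t+j)+2 from by omega, show t+(j+1) = (t+j)+1 from by omega]
        exact hstep.2
  intro k hk
  have hj := hgrow (k - t - 1)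
  rw [show t+1+(k-t-1) = k from by omega] at hj
  rw [hj.1, show (k-t-1)+1 = k - t from by omega]
end

section
/- Let f(x) ∈ ℤ[x] be monic of degree n, p a prime, m ≥ 1, and suppose x^k ≡ 1 + p^m s(x) mod f(x) in ℤ[x], where s is an integer polynomial of degree < n not all of whose coefficients are divisible by p. Then x^{pk} ≡ 1 + p^{m+1} l(x) mod f(x) for some integer polynomial l of degree < n not all of whose coefficients are divisible by p (assuming p is odd). -/
open Polynomial Finset

lemma key_binom (p m : ℕ) (hp : p.Prime) (hodd : Odd p) (hm : 1 ≤ m) (s : Polynomial ℤ) :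
    ∃ t : Polynomial ℤ, (1 + C ((p:ℤ)^m) * s)^p
      = 1 + C ((p:ℤ)^(m+1)) * s + C ((p:ℤ)^(m+2)) * t := by
  have hp3 : 3 ≤ p := by
    have := hp.two_le
    rcases hodd with ⟨j, hj⟩
    omega
  set a : Polynomial ℤ := C ((p:ℤ)^m) * s with ha
  set g : ℕ → ℤ[X] := fun j => a ^ j * 1 ^ (p - j) * (p.choose j : ℤ[X]) with hg
  have hpow : (1 + a)^p = ∑ j ∈ range (p+1), g j := by
    rw [add_comm, add_pow]
  have hsplit : ∑ j ∈ range (p+1), g j = g 0 + g 1 + ∑ j ∈ Ico 2 (p+1), g j := by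
    rw [Finset.range_eq_Ico, ← Finset.sum_Ico_consecutive _ (by omega : 0 ≤ 2) (by omega : 2 ≤ p+1)]
    congr 1
    rw [show (2:ℕ) = 0 + 1 + 1 by rfl, Finset.sum_Ico_succ_top (by omega), Finset.sum_Ico_succ_top (by omega)]
    simp
  have hdvd : C ((p:ℤ)^(m+2)) ∣ ∑ j ∈ Ico 2 (p+1), g j := by
    apply Finset.dvd_sum
    intro j hj
    simp only [Finset.mem_Ico] at hj
    have hint : ((p:ℤ))^(m+2) ∣ ((p:ℤ))^(m*j) * (p.choose j : ℤ) := by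
      rcases eq_or_lt_of_le (show j ≤ p by omega) with h | h
      · have : p.choose j = 1 := by rw [h]; exact Nat.choose_self p
        rw [this]
        simp only [Nat.cast_one, mul_one]
        exact pow_dvd_pow _ (by nlinarith)
      · have hch : (p:ℤ) ∣ (p.choose j : ℤ) :=
          Int.natCast_dvd_natCast.mpr (hp.dvd_choose_self (by omega) h)
        have h1 : ((p:ℤ))^(m+1) ∣ ((p:ℤ))^(m*j) := pow_dvd_pow _ (by nlinarith)
        calc ((p:ℤ))^(m+2) = ((p:ℤ))^(m+1) * (p:ℤ) := by ring
        _ ∣ ((p:ℤ))^(m*j) * (p.choose j : ℤ) := mul_dvd_mul h1 hch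
    obtain ⟨c, hc⟩ := hint
    refine ⟨C c * s ^ j, ?_⟩
    have h2 : a ^ j = C (((p:ℤ))^(m*j)) * s ^ j := by
      rw [ha, mul_pow, ← C_pow, ← pow_mul]
    have h3 : (p.choose j : ℤ[X]) = C ((p.choose j : ℤ)) := by simp
    rw [hg]
    simp only [h2, h3, one_pow, mul_one]
    rw [mul_comm (C ((p:ℤ)^(m*j)) * s ^ j), ← mul_assoc, ← C_mul, mul_comm ((p.choose j : ℤ)), hc, C_mul]
    ring
  obtain ⟨t, ht⟩ := hdvd
  refine ⟨t, ?_⟩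
  rw [hpow, hsplit, ht, hg]
  simp only [pow_zero, pow_one, one_pow, mul_one, one_mul, Nat.choose_zero_right, Nat.choose_one_right,
    Nat.cast_one, ha]
  have h4 : (p : ℤ[X]) = C ((p:ℤ)) := by simp
  rw [h4, mul_comm _ (C ((p:ℤ))), ← mul_assoc, ← C_mul]
  ring_nf

/-- Let `f ∈ ℤ[X]` be monic of degree `n`, `p` an odd prime, `m ≥ 1`, and
suppose `X^k ≡ 1 + p^m s(X) mod f(X)` where `deg s < n` and not all
coefficients of `s` are divisible by `p`. Then
`X^{pk} ≡ 1 + p^{m+1} l(X) mod f(X)` for some `l` of degree `< n`, not all of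
whose coefficients are divisible by `p`. -/
theorem stmt_7 (f : Polynomial ℤ) (hf : f.Monic) (n : ℕ) (hdeg : f.natDegree = n)
    (p : ℕ) (hp : p.Prime) (hodd : Odd p) (m : ℕ) (hm : 1 ≤ m)
    (k : ℕ) (s : Polynomial ℤ) (hs_deg : s.degree < n)
    (hs_p : ∃ i : ℕ, ¬(p : ℤ) ∣ s.coeff i)
    (hcong : ∃ q : Polynomial ℤ, (X : Polynomial ℤ) ^ k = 1 + C ((p : ℤ) ^ m) * s + f * q) :
    ∃ l : Polynomial ℤ, l.degree < n ∧ (∃ i : ℕ, ¬(p : ℤ) ∣ l.coeff i) ∧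
      ∃ q : Polynomial ℤ, (X : Polynomial ℤ) ^ (p * k) = 1 + C ((p : ℤ) ^ (m + 1)) * l + f * q := by
  obtain ⟨q, hq⟩ := hcong
  obtain ⟨t, ht⟩ := key_binom p m hp hodd hm s
  obtain ⟨l, d, hld, hwl⟩ : ∃ l d : Polynomial ℤ, l = (s + C ((p:ℤ)) * t) %ₘ f ∧
      l + f * d = s + C ((p:ℤ)) * t := ⟨(s + C ((p:ℤ)) * t) %ₘ f, (s + C ((p:ℤ)) * t) /ₘ f, rfl, modByMonic_add_div _ f⟩
  have hfdeg : f.degree = (n : WithBot ℕ) := by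
    rw [degree_eq_natDegree hf.ne_zero, hdeg]
  have hldeg : l.degree < (n : WithBot ℕ) := by
    rw [hld, ← hfdeg]; exact degree_modByMonic_lt _ hf
  have hC : C ((p:ℤ)^(m+2)) = C ((p:ℤ)^(m+1)) * C ((p:ℤ)) := by rw [← C_mul, ← pow_succ]
  have hA : (1 + C ((p:ℤ)^m) * s)^p = 1 + C ((p:ℤ)^(m+1)) * l
      + f * (C ((p:ℤ)^(m+1)) * d) := by
    rw [ht]
    linear_combination (-(C ((p:ℤ)^(m+1)))) * hwl + t * hC
  have hsub : f ∣ (X : Polynomial ℤ) ^ (p*k) - (1 + C ((p:ℤ)^(m+1)) * l) := by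
    have h1 : (X : Polynomial ℤ) ^ (p*k) = ((1 + C ((p:ℤ)^m) * s) + f * q)^p := by
      rw [mul_comm p k, pow_mul, hq]
    have h2 : f ∣ ((1 + C ((p:ℤ)^m) * s) + f * q)^p - (1 + C ((p:ℤ)^m) * s)^p := by
      refine dvd_trans (dvd_mul_right f q) ?_
      have := sub_dvd_pow_sub_pow ((1 + C ((p:ℤ)^m) * s) + f * q) (1 + C ((p:ℤ)^m) * s) p
      simpa using this
    have h3 : f ∣ (1 + C ((p:ℤ)^m) * s)^p - (1 + C ((p:ℤ)^(m+1)) * l) :=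
      ⟨C ((p:ℤ)^(m+1)) * d, by linear_combination hA⟩
    have := dvd_add h2 h3
    rw [h1]
    convert this using 1
    ring
  obtain ⟨q', hq'⟩ := hsub
  refine ⟨l, hldeg, ?_, q', by linear_combination hq'⟩
  by_contra hcon
  push_neg at hcon
  haveI : Fact p.Prime := ⟨hp⟩
  set φ : ℤ →+* ZMod p := Int.castRingHom (ZMod p) with hφ
  have hl0 : l.map φ = 0 := by
    ext i
    simp only [coeff_map, coeff_zero, hφ, Int.coe_castRingHom]
    exact (ZMod.intCast_zmod_eq_zero_iff_dvd _ _).mpr (hcon i)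
  have hp0 : φ ((p:ℤ)) = 0 := by simp [hφ]
  have hseq : s.map φ = f.map φ * d.map φ := by
    have hs' : s = f * d + l - C ((p:ℤ)) * t := by linear_combination -hwl
    rw [hs']
    simp only [Polynomial.map_sub, Polynomial.map_add, Polynomial.map_mul, hl0, map_C, hp0]
    simp
  have hsne : s.map φ ≠ 0 := by
    obtain ⟨i, hi⟩ := hs_p
    intro h0
    apply hi
    have := congrArg (fun r => r.coeff i) h0
    simp only [coeff_map, coeff_zero, hφ, Int.coe_castRingHom] at this
    exact (ZMod.intCast_zmod_eq_zero_iff_dvd _ _).mp this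
  have hfm : (f.map φ).Monic := hf.map φ
  have hcontra : (f.map φ).degree ≤ (s.map φ).degree :=
    degree_le_of_dvd ⟨_, hseq⟩ hsne
  have h6 : (f.map φ).degree = (n : WithBot ℕ) := by
    rw [degree_eq_natDegree hfm.ne_zero, hf.natDegree_map, hdeg]
  have h7 : (s.map φ).degree < (n : WithBot ℕ) :=
    lt_of_le_of_lt degree_map_le hs_deg
  rw [h6] at hcontra
  exact absurd (lt_of_le_of_lt hcontra h7) (lt_irrefl _)
end

section
/- Let A, B, P be n × n integer matrices with det(P) ≠ 0 and PA = BP. If O is a periodic orbit of the toral endomorphism induced by B with period T(O), then there exists a periodic orbit O' of the toral endomorphism induced by A contained in P⁻¹(O mod 1) whose period T(O') satisfies T(O') = k·T(O) for some integer k with 1 ≤ k ≤ |det(P)|. -/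
/-- `x` and `y` in `ℝⁿ` represent the same point of the torus `ℝⁿ/ℤⁿ`. -/
def TorusEq {n : ℕ} (x y : Fin n → ℝ) : Prop :=
  ∀ i, ∃ m : ℤ, x i - y i = (m : ℝ)

/-- The real matrix induced by an integer matrix. -/
def intMatToReal {n : ℕ} (M : Matrix (Fin n) (Fin n) ℤ) : Matrix (Fin n) (Fin n) ℝ :=
  M.map (Int.cast : ℤ → ℝ)

/-- `x` represents a periodic point of the toral endomorphism induced by `M`,
with minimal period `T`. -/
def IsMinPeriodicPt {n : ℕ} (M : Matrix (Fin n) (Fin n) ℤ) (x : Fin n → ℝ) (T : ℕ) : Prop :=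
  0 < T ∧ TorusEq (((intMatToReal M) ^ T).mulVec x) x ∧
    ∀ t : ℕ, 0 < t → TorusEq (((intMatToReal M) ^ t).mulVec x) x → T ≤ t

namespace Stmt8Aux

variable {n : ℕ}

lemma torusEq_refl (x : Fin n → ℝ) : TorusEq x x := fun _ => ⟨0, by simp⟩

lemma torusEq_symm {x y : Fin n → ℝ} (h : TorusEq x y) : TorusEq y x := fun i => by
  obtain ⟨m, hm⟩ := h i
  exact ⟨-m, by push_cast; linarith⟩

lemma torusEq_trans {x y z : Fin n → ℝ} (h1 : TorusEq x y) (h2 : TorusEq y z) :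
    TorusEq x z := fun i => by
  obtain ⟨m, hm⟩ := h1 i
  obtain ⟨m', hm'⟩ := h2 i
  exact ⟨m + m', by push_cast; linarith⟩

lemma intMatToReal_eq (M : Matrix (Fin n) (Fin n) ℤ) :
    intMatToReal M = (Int.castRingHom ℝ).mapMatrix M := by
  ext i j; simp [intMatToReal]

lemma intMatToReal_mul (M N : Matrix (Fin n) (Fin n) ℤ) :
    intMatToReal (M * N) = intMatToReal M * intMatToReal N := by
  simp only [intMatToReal_eq]; exact map_mul _ M N

lemma intMatToReal_pow (M : Matrix (Fin n) (Fin n) ℤ) (k : ℕ) :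
    intMatToReal (M ^ k) = (intMatToReal M) ^ k := by
  simp only [intMatToReal_eq]; exact map_pow _ M k

lemma intMatToReal_one : intMatToReal (1 : Matrix (Fin n) (Fin n) ℤ) = 1 := by
  simp only [intMatToReal_eq]; exact map_one _

lemma castVec_mulVec (M : Matrix (Fin n) (Fin n) ℤ) (v : Fin n → ℤ) :
    (intMatToReal M).mulVec (fun i => (v i : ℝ)) = fun i => ((M.mulVec v i : ℤ) : ℝ) := by
  funext i
  simp only [Matrix.mulVec, dotProduct, intMatToReal, Matrix.map_apply]
  push_cast
  rfl

lemma mulVec_torusEq (M : Matrix (Fin n) (Fin n) ℤ) {u v : Fin n → ℝ} (h : TorusEq u v) :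
    TorusEq ((intMatToReal M).mulVec u) ((intMatToReal M).mulVec v) := by
  intro i
  choose m hm using h
  refine ⟨M.mulVec m i, ?_⟩
  simp only [Matrix.mulVec, dotProduct, intMatToReal, Matrix.map_apply]
  push_cast
  rw [← Finset.sum_sub_distrib]
  exact Finset.sum_congr rfl fun j _ => by rw [← mul_sub, hm j]

lemma detReal (P : Matrix (Fin n) (Fin n) ℤ) :
    (intMatToReal P).det = ((P.det : ℤ) : ℝ) := by
  rw [intMatToReal_eq, ← RingHom.map_det]
  rfl

lemma mulVec_cancel {P : Matrix (Fin n) (Fin n) ℤ} (hdet : P.det ≠ 0)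
    {u v : Fin n → ℝ} (h : (intMatToReal P).mulVec u = (intMatToReal P).mulVec v) : u = v := by
  have hdR : IsUnit (intMatToReal P).det := by
    rw [detReal]; exact isUnit_iff_ne_zero.mpr (by exact_mod_cast hdet)
  have := congrArg ((intMatToReal P)⁻¹.mulVec) h
  rwa [Matrix.mulVec_mulVec, Matrix.mulVec_mulVec, Matrix.nonsing_inv_mul _ hdR,
    Matrix.one_mulVec, Matrix.one_mulVec] at this

lemma toLin'_injective {P : Matrix (Fin n) (Fin n) ℤ} (hdet : P.det ≠ 0) :
    Function.Injective (Matrix.toLin' P) := by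
  rw [← LinearMap.ker_eq_bot, Matrix.ker_toLin'_eq_bot_iff]
  intro v hv
  have h1 : (intMatToReal P).mulVec (fun i => (v i : ℝ)) = fun i => ((P.mulVec v i : ℤ) : ℝ) :=
    castVec_mulVec P v
  rw [hv] at h1
  have h2 : (intMatToReal P).mulVec (fun i => (v i : ℝ)) = (intMatToReal P).mulVec 0 := by
    rw [h1, Matrix.mulVec_zero]; funext i; simp
  have h3 := mulVec_cancel hdet h2
  funext i
  have := congrFun h3 i
  simp only [Pi.zero_apply] at this ⊢
  exact_mod_cast this

end Stmt8Aux

namespace Stmt8Aux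

lemma index_range_eq {n : ℕ} (P : Matrix (Fin n) (Fin n) ℤ) (hdet : P.det ≠ 0) :
    (LinearMap.range (Matrix.toLin' P)).toAddSubgroup.index = P.det.natAbs := by
  classical
  have hinj := toLin'_injective hdet
  set N := LinearMap.range (Matrix.toLin' P) with hN
  obtain ⟨m, snf⟩ := N.smithNormalForm (Pi.basisFun ℤ (Fin n))
  let e : (Fin n → ℤ) ≃ₗ[ℤ] N := LinearEquiv.ofInjective _ hinj
  have hmn : m = n := by
    have := card_eq_of_linearEquiv ℤ (snf.bN.equivFun.symm.trans e.symm)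
    simpa using this
  subst hmn
  rw [snf.toAddSubgroup_index_eq_pow_mul_prod]
  simp only [Fintype.card_fin, Nat.sub_self, pow_zero, one_mul,
    Ideal.span_singleton_toAddSubgroup_eq_zmultiples, Int.index_zmultiples]
  -- goal : ∏ i, (snf.a i).natAbs = P.det.natAbs
  set c : Module.Basis (Fin m) ℤ (Fin m → ℤ) := snf.bN.map e.symm with hc
  have hL : ∀ j, Matrix.toLin' P (c j) = (snf.bN j : Fin m → ℤ) := by
    intro j
    have h1 : c j = e.symm (snf.bN j) := by simp [hc, Module.Basis.map_apply]
    have h2 : ((e (e.symm (snf.bN j))) : Fin m → ℤ) = Matrix.toLin' P (e.symm (snf.bN j)) :=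
      rfl
    rw [h1, ← h2, e.apply_symm_apply]
  set D := LinearMap.toMatrix c snf.bM (Matrix.toLin' P) with hD
  have hDij : ∀ i j, D i j = if snf.f j = i then snf.a j else 0 := by
    intro i j
    rw [hD, LinearMap.toMatrix_apply, hL j, snf.snf j, map_smul, Module.Basis.repr_self]
    simp only [Finsupp.smul_apply, Finsupp.single_apply, smul_eq_mul]
    split_ifs <;> simp
  have hbij : Function.Bijective snf.f := Finite.injective_iff_bijective.mp snf.f.injective
  set σ : Equiv.Perm (Fin m) := Equiv.ofBijective _ hbij with hσ
  have hσap : ∀ j, σ j = snf.f j := fun j => rfl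
  have hDeq : D = (Matrix.diagonal snf.a).submatrix σ.symm id := by
    ext i j
    rw [hDij]
    simp only [Matrix.submatrix_apply, Matrix.diagonal_apply, id]
    by_cases h : snf.f j = i
    · have hs : σ.symm i = j := by rw [Equiv.symm_apply_eq, hσap]; exact h.symm
      rw [if_pos h, if_pos hs, hs]
    · have hs : ¬ σ.symm i = j := by
        intro hcon
        exact h (by rw [← hcon, ← hσap, σ.apply_symm_apply])
      rw [if_neg h, if_neg hs]
  have hdetD : D.det = ((Equiv.Perm.sign σ.symm : ℤˣ) : ℤ) * ∏ i, snf.a i := by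
    rw [hDeq, Matrix.det_permute, Matrix.det_diagonal]
    norm_cast
  set U := LinearMap.toMatrix snf.bM c (LinearMap.id) with hU
  have hcc : LinearMap.toMatrix c c (Matrix.toLin' P) = U * D := by
    rw [hU, hD, ← LinearMap.toMatrix_comp c snf.bM c, LinearMap.id_comp]
  have hUV : U * (LinearMap.toMatrix c snf.bM (LinearMap.id)) = 1 := by
    rw [hU, ← LinearMap.toMatrix_comp c snf.bM c, LinearMap.id_comp, LinearMap.toMatrix_id]
  have hUdet : IsUnit U.det :=
    IsUnit.of_mul_eq_one _ (by rw [← Matrix.det_mul, hUV, Matrix.det_one])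
  have hPdet : P.det = U.det * D.det := by
    rw [← LinearMap.det_toLin' P, ← LinearMap.det_toMatrix c, hcc, Matrix.det_mul]
  have hUabs : U.det.natAbs = 1 := Int.isUnit_iff.mp hUdet |>.elim
    (fun h => by rw [h]; rfl) (fun h => by rw [h]; rfl)
  have : P.det.natAbs = ∏ i, (snf.a i).natAbs := by
    rw [hPdet, Int.natAbs_mul, hUabs, one_mul, hdetD, Int.natAbs_mul]
    have hsgn : ((Equiv.Perm.sign σ.symm : ℤˣ) : ℤ).natAbs = 1 := Int.units_natAbs _
    rw [hsgn, one_mul]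
    exact map_prod Int.natAbsHom snf.a Finset.univ
  rw [this]

end Stmt8Aux

/-- If `P A = B P` with `det P ≠ 0` (integer matrices) and `O` is a periodic
orbit of the toral endomorphism induced by `B`, with period `T`, then inside
`P⁻¹(O)` there is a periodic orbit of the endomorphism induced by `A` whose
period is `k·T` for some `1 ≤ k ≤ |det P|`. -/
theorem stmt_8 (n : ℕ) (A B P : Matrix (Fin n) (Fin n) ℤ)
    (hdet : P.det ≠ 0) (hPA : P * A = B * P)
    (x : Fin n → ℝ) (T : ℕ) (hx : IsMinPeriodicPt B x T) :
    ∃ (y : Fin n → ℝ) (T' k : ℕ),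
      IsMinPeriodicPt A y T' ∧
      T' = k * T ∧ 1 ≤ k ∧ (k : ℤ) ≤ |P.det| ∧
      -- the orbit of `y` is contained in the preimage under `P` of the orbit of `x`
      ∀ j : ℕ, ∃ i : ℕ,
        TorusEq ((intMatToReal P).mulVec (((intMatToReal A) ^ j).mulVec y))
          (((intMatToReal B) ^ i).mulVec x) := by
  classical
  obtain ⟨hT, hxT, hxmin⟩ := hx
  have hxT' : TorusEq ((intMatToReal (B ^ T)).mulVec x) x := by
    rw [Stmt8Aux.intMatToReal_pow]; exact hxT
  have hxmin' : ∀ t : ℕ, 0 < t → TorusEq ((intMatToReal (B ^ t)).mulVec x) x → T ≤ t :=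
    fun t ht h => hxmin t ht (by rw [← Stmt8Aux.intMatToReal_pow]; exact h)
  have hcomm : ∀ t : ℕ, P * A ^ t = B ^ t * P := by
    intro t
    induction t with
    | zero => simp
    | succ t ih => rw [pow_succ, ← mul_assoc, ih, mul_assoc, hPA, ← mul_assoc, ← pow_succ]
  have hcommR : ∀ t : ℕ, ∀ v : Fin n → ℝ,
      (intMatToReal P).mulVec ((intMatToReal (A ^ t)).mulVec v)
        = (intMatToReal (B ^ t)).mulVec ((intMatToReal P).mulVec v) := by
    intro t v
    rw [Matrix.mulVec_mulVec, Matrix.mulVec_mulVec, ← Stmt8Aux.intMatToReal_mul,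
      ← Stmt8Aux.intMatToReal_mul, hcomm t]
  have hdR : IsUnit (intMatToReal P).det := by
    rw [Stmt8Aux.detReal]; exact isUnit_iff_ne_zero.mpr (by exact_mod_cast hdet)
  obtain ⟨y₀, hy₀⟩ : ∃ y₀ : Fin n → ℝ, (intMatToReal P).mulVec y₀ = x :=
    ⟨(intMatToReal P)⁻¹.mulVec x, by
      rw [Matrix.mulVec_mulVec, Matrix.mul_nonsing_inv _ hdR, Matrix.one_mulVec]⟩
  set d := P.det.natAbs with hddef
  have hd1 : 1 ≤ d := Int.natAbs_pos.mpr hdet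
  set z : ℕ → (Fin n → ℝ) := fun j => (intMatToReal (A ^ (j * T))).mulVec y₀ with hzdef
  have hzstep : ∀ j, z (j + 1) = (intMatToReal (A ^ T)).mulVec (z j) := by
    intro j
    have hE : (j + 1) * T = T + j * T := by ring
    show (intMatToReal (A ^ ((j + 1) * T))).mulVec y₀
      = (intMatToReal (A ^ T)).mulVec ((intMatToReal (A ^ (j * T))).mulVec y₀)
    rw [Matrix.mulVec_mulVec, ← Stmt8Aux.intMatToReal_mul, ← pow_add, hE]
  have hPz : ∀ j, TorusEq ((intMatToReal P).mulVec (z j)) x := by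
    intro j
    induction j with
    | zero =>
      show TorusEq ((intMatToReal P).mulVec ((intMatToReal (A ^ (0 * T))).mulVec y₀)) x
      rw [Nat.zero_mul, pow_zero, Stmt8Aux.intMatToReal_one, Matrix.one_mulVec, hy₀]
      exact Stmt8Aux.torusEq_refl x
    | succ j ih =>
      rw [hzstep j, hcommR T (z j)]
      exact Stmt8Aux.torusEq_trans (Stmt8Aux.mulVec_torusEq (B ^ T) ih) hxT'
  have htor : ∀ j : ℕ, ∀ i, ∃ m : ℤ,
      (intMatToReal P).mulVec (z j) i - (intMatToReal P).mulVec (z 0) i = (m : ℝ) :=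
    fun j => Stmt8Aux.torusEq_trans (hPz j) (Stmt8Aux.torusEq_symm (hPz 0))
  choose w hw using htor
  set N := LinearMap.range (Matrix.toLin' P) with hNdef
  have hidx := Stmt8Aux.index_range_eq P hdet
  have hcard : Nat.card ((Fin n → ℤ) ⧸ N.toAddSubgroup) = d := by
    rw [← AddSubgroup.index_eq_card]; exact hidx
  have hfin : Finite ((Fin n → ℤ) ⧸ N.toAddSubgroup) :=
    Nat.finite_of_card_ne_zero (by omega)
  have hfty := Fintype.ofFinite ((Fin n → ℤ) ⧸ N.toAddSubgroup)
  obtain ⟨a, b, hab, heq⟩ := Fintype.exists_ne_map_eq_of_card_lt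
    (fun j : Fin (d + 1) =>
      (QuotientAddGroup.mk (w (j : ℕ)) : (Fin n → ℤ) ⧸ N.toAddSubgroup))
    (by rw [Fintype.card_fin, ← Nat.card_eq_fintype_card, hcard]; omega)
  obtain ⟨p, q, hpq, hmk⟩ : ∃ p q : Fin (d + 1), (p : ℕ) < (q : ℕ) ∧
      (QuotientAddGroup.mk (w (p : ℕ)) : (Fin n → ℤ) ⧸ N.toAddSubgroup)
        = QuotientAddGroup.mk (w (q : ℕ)) := by
    rcases hab.lt_or_gt with hlt | hlt
    · exact ⟨a, b, hlt, heq⟩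
    · exact ⟨b, a, hlt, heq.symm⟩
  set pa := (p : ℕ) with hpa
  set qa := (q : ℕ) with hqa
  have hqd : qa ≤ d := Nat.lt_succ_iff.mp q.isLt
  have hmem : w qa - w pa ∈ N := by
    have h := QuotientAddGroup.eq.mp hmk
    rwa [neg_add_eq_sub, Submodule.mem_toAddSubgroup] at h
  obtain ⟨mv, hmv⟩ := hmem
  have hPmv : P.mulVec mv = w qa - w pa := by
    rw [← Matrix.toLin'_apply]; exact hmv
  have hzz : z qa - z pa = fun i => ((mv i : ℤ) : ℝ) := by
    apply Stmt8Aux.mulVec_cancel hdet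
    rw [Matrix.mulVec_sub, Stmt8Aux.castVec_mulVec, hPmv]
    funext i
    have h1 := hw qa i
    have h2 := hw pa i
    simp only [Pi.sub_apply]
    push_cast
    linarith
  have hzq : TorusEq (z qa) (z pa) := by
    intro i
    refine ⟨mv i, ?_⟩
    have h := congrFun hzz i
    simpa using h
  set k₀ := qa - pa with hk₀
  have hk₀1 : 1 ≤ k₀ := by omega
  have hk₀d : k₀ ≤ d := by omega
  set y := z pa with hy
  have hexp : k₀ * T + pa * T = qa * T := by rw [← add_mul]; congr 1; omega
  have hyk : TorusEq ((intMatToReal (A ^ (k₀ * T))).mulVec y) y := by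
    have hzq' : (intMatToReal (A ^ (k₀ * T))).mulVec (z pa) = z qa := by
      show (intMatToReal (A ^ (k₀ * T))).mulVec ((intMatToReal (A ^ (pa * T))).mulVec y₀)
        = (intMatToReal (A ^ (qa * T))).mulVec y₀
      rw [Matrix.mulVec_mulVec, ← Stmt8Aux.intMatToReal_mul, ← pow_add, hexp]
    rw [hy, hzq']
    exact hzq
  have hkT : 0 < k₀ * T := Nat.mul_pos hk₀1 hT
  have hex : ∃ t, 0 < t ∧ TorusEq (((intMatToReal A) ^ t).mulVec y) y :=
    ⟨k₀ * T, hkT, by rw [← Stmt8Aux.intMatToReal_pow]; exact hyk⟩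
  set T' := Nat.find hex with hT'def
  obtain ⟨hT'pos, hT'eq⟩ := Nat.find_spec hex
  have hmin : ∀ t, 0 < t → TorusEq (((intMatToReal A) ^ t).mulVec y) y → T' ≤ t :=
    fun t ht htt => Nat.find_min' hex ⟨ht, htt⟩
  have hT'le : T' ≤ k₀ * T :=
    Nat.find_min' hex ⟨hkT, by rw [← Stmt8Aux.intMatToReal_pow]; exact hyk⟩
  have hT'eq' : TorusEq ((intMatToReal (A ^ T')).mulVec y) y := by
    rw [Stmt8Aux.intMatToReal_pow]; exact hT'eq
  have hPy : TorusEq ((intMatToReal P).mulVec y) x := hPz pa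
  have t1 : TorusEq ((intMatToReal P).mulVec ((intMatToReal (A ^ T')).mulVec y)) x :=
    Stmt8Aux.torusEq_trans (Stmt8Aux.mulVec_torusEq P hT'eq') hPy
  have t2 : TorusEq ((intMatToReal (B ^ T')).mulVec x)
      ((intMatToReal (B ^ T')).mulVec ((intMatToReal P).mulVec y)) :=
    Stmt8Aux.mulVec_torusEq (B ^ T') (Stmt8Aux.torusEq_symm hPy)
  have hBT' : TorusEq ((intMatToReal (B ^ T')).mulVec x) x := by
    refine Stmt8Aux.torusEq_trans t2 ?_
    rw [← hcommR T' y]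
    exact t1
  have hqmul : ∀ s : ℕ, TorusEq ((intMatToReal (B ^ (s * T))).mulVec x) x := by
    intro s
    induction s with
    | zero =>
      rw [Nat.zero_mul, pow_zero, Stmt8Aux.intMatToReal_one, Matrix.one_mulVec]
      exact Stmt8Aux.torusEq_refl x
    | succ s ih =>
      have hE : (s + 1) * T = T + s * T := by ring
      have hstep : (intMatToReal (B ^ ((s + 1) * T))).mulVec x
          = (intMatToReal (B ^ T)).mulVec ((intMatToReal (B ^ (s * T))).mulVec x) := by
        rw [Matrix.mulVec_mulVec, ← Stmt8Aux.intMatToReal_mul, ← pow_add, hE]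
      rw [hstep]
      exact Stmt8Aux.torusEq_trans (Stmt8Aux.mulVec_torusEq _ ih) hxT'
  set s := T' / T with hs
  set r := T' % T with hrr
  have hsr : s * T + r = T' := by rw [hs, hrr, Nat.mul_comm]; exact Nat.div_add_mod T' T
  have hBr : TorusEq ((intMatToReal (B ^ r)).mulVec x) x := by
    have hE : r + s * T = T' := by omega
    have hsplit : (intMatToReal (B ^ T')).mulVec x
        = (intMatToReal (B ^ r)).mulVec ((intMatToReal (B ^ (s * T))).mulVec x) := by
      rw [Matrix.mulVec_mulVec, ← Stmt8Aux.intMatToReal_mul, ← pow_add, hE]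
    have h5 : TorusEq ((intMatToReal (B ^ T')).mulVec x) ((intMatToReal (B ^ r)).mulVec x) := by
      rw [hsplit]
      exact Stmt8Aux.mulVec_torusEq _ (hqmul s)
    exact Stmt8Aux.torusEq_trans (Stmt8Aux.torusEq_symm h5) hBT'
  have hr0 : r = 0 := by
    by_contra h
    have h1 : T ≤ r := hxmin' r (Nat.pos_of_ne_zero h) hBr
    have h2 : r < T := Nat.mod_lt _ hT
    omega
  have hT'eqst : T' = s * T := by omega
  have hs1 : 1 ≤ s := by
    rcases Nat.eq_zero_or_pos s with h | h
    · rw [h, Nat.zero_mul] at hT'eqst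
      omega
    · exact h
  have hsk : s ≤ k₀ := by
    have h : s * T ≤ k₀ * T := by rw [← hT'eqst]; exact hT'le
    exact Nat.le_of_mul_le_mul_right h hT
  refine ⟨y, T', s, ⟨hT'pos, hT'eq, hmin⟩, hT'eqst, hs1, ?_, ?_⟩
  · rw [Int.abs_eq_natAbs]
    exact_mod_cast le_trans hsk hk₀d
  · intro j
    refine ⟨j, ?_⟩
    rw [← Stmt8Aux.intMatToReal_pow, ← Stmt8Aux.intMatToReal_pow, hcommR j y]
    exact Stmt8Aux.mulVec_torusEq (B ^ j) hPy
end

section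
/- Let c₀ be an integer with |c₀| ≥ 2 and let p be an odd prime with gcd(p, c₀) = 1. For k ≥ 1, consider the point v_k = p^{−k} mod 1 on the circle 𝕋¹ under the endomorphism x ↦ c₀ x mod 1. Set d = min{ n > 0 : p ∣ c₀ⁿ − 1 } and t = v_p(c₀^d − 1). Then the forward orbit O_k of v_k is periodic with period T(O_k) ≥ p^{k−t} for k ≥ t, and the minimal distance between distinct orbit points satisfies d(O_k) ≥ p^{−k}; consequently d(O_k)·T(O_k) ≥ p^{−t}. -/
private lemma circ_zero_iff (N : ℕ) (hN : 0 < N) (n : ℤ) :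
    (((n : ℝ) / (N : ℝ) : ℝ) : AddCircle (1 : ℝ)) = 0 ↔ (N : ℤ) ∣ n := by
  have hN' : (N : ℝ) ≠ 0 := by positivity
  rw [AddCircle.coe_eq_zero_iff]
  constructor
  · rintro ⟨z, hz⟩
    refine ⟨z, ?_⟩
    rw [zsmul_eq_mul, mul_one] at hz
    have h2 : (n : ℝ) = (N : ℝ) * (z : ℝ) := by field_simp at hz; linarith [hz]
    exact_mod_cast h2
  · rintro ⟨z, rfl⟩
    refine ⟨z, ?_⟩
    rw [zsmul_eq_mul, mul_one]
    push_cast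
    rw [mul_comm ((N:ℝ)) ((z:ℝ)), mul_div_assoc, div_self hN', mul_one]

private lemma circ_norm_lb (N : ℕ) (hN : 0 < N) (n : ℤ) (h : ¬ (N : ℤ) ∣ n) :
    ((N : ℝ))⁻¹ ≤ ‖(((n : ℝ) / (N : ℝ) : ℝ) : AddCircle (1 : ℝ))‖ := by
  have hN' : (0 : ℝ) < (N : ℝ) := by exact_mod_cast hN
  rw [AddCircle.norm_eq]
  set z : ℤ := round ((1 : ℝ)⁻¹ * ((n : ℝ) / (N : ℝ))) with hz
  have hm : n - z * N ≠ 0 := by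
    intro hc
    exact h ⟨z, by rw [mul_comm]; omega⟩
  have h1 : (1 : ℝ) ≤ |((n - z * N : ℤ) : ℝ)| := by
    exact_mod_cast Int.one_le_abs hm
  have heq : (n : ℝ) / (N : ℝ) - (z : ℝ) * 1 = ((n - z * N : ℤ) : ℝ) / (N : ℝ) := by
    push_cast; field_simp
  rw [heq, abs_div, abs_of_pos hN', inv_eq_one_div]
  gcongr

/-- The circle case: for `|c₀| ≥ 2`, `p` an odd prime coprime to `c₀`,
`d = min{n > 0 : p ∣ c₀ⁿ - 1}`, `t = v_p(c₀^d - 1)` and `k ≥ t`, the point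
`v = p⁻ᵏ` on `𝕋¹ = ℝ/ℤ` has a periodic forward orbit under `x ↦ c₀x` whose
period `T` satisfies `T ≥ p^(k-t)`, distinct orbit points are at distance
`≥ p⁻ᵏ`, and hence `d(O)·T ≥ p⁻ᵗ`. -/
theorem stmt_11 (c₀ : ℤ) (hc : 2 ≤ |c₀|) (p : ℕ) (hp : p.Prime) (hodd : Odd p)
    (hcop : IsCoprime c₀ (p : ℤ)) (d t : ℕ)
    (hd : d = sInf {n : ℕ | 0 < n ∧ (p : ℤ) ∣ c₀ ^ n - 1})
    (ht : t = padicValInt p (c₀ ^ d - 1))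
    (k : ℕ) (hk : t ≤ k)
    (v : AddCircle (1 : ℝ)) (hv : v = (((p : ℝ) ^ k)⁻¹ : ℝ))
    (T : ℕ) (hT : T = sInf {m : ℕ | 0 < m ∧ (c₀ ^ m : ℤ) • v = v})
    (hnontriv : ∃ i j : ℕ, (c₀ ^ i : ℤ) • v ≠ (c₀ ^ j : ℤ) • v)
    (dO : ℝ)
    (hdO : dO = sInf {r : ℝ | ∃ i j : ℕ, (c₀ ^ i : ℤ) • v ≠ (c₀ ^ j : ℤ) • v ∧
      r = dist ((c₀ ^ i : ℤ) • v) ((c₀ ^ j : ℤ) • v)}) :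
    (∃ m : ℕ, 0 < m ∧ (c₀ ^ m : ℤ) • v = v) ∧
    (p : ℝ) ^ (k - t) ≤ (T : ℝ) ∧
    ((p : ℝ) ^ k)⁻¹ ≤ dO ∧
    ((p : ℝ) ^ t)⁻¹ ≤ dO * T := by
  haveI : Fact p.Prime := ⟨hp⟩
  have hpZ : Prime ((p : ℤ)) := Nat.prime_iff_prime_int.mp hp
  have hppos : 0 < p := hp.pos
  have hNpos : 0 < p ^ k := pow_pos hppos k
  -- p does not divide c₀
  have hpc : ¬ (p : ℤ) ∣ c₀ := fun h => hpZ.not_unit (hcop.isUnit_of_dvd' h dvd_rfl)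
  -- basic facts about d via ZMod p
  have hu : (c₀ : ZMod p) ≠ 0 := by
    rw [Ne, ZMod.intCast_zmod_eq_zero_iff_dvd]; exact hpc
  have hfin : IsOfFinOrder ((c₀ : ZMod p)) :=
    isOfFinOrder_iff_pow_eq_one.mpr
      ⟨p - 1, Nat.sub_pos_of_lt hp.one_lt, ZMod.pow_card_sub_one_eq_one hu⟩
  have hmem : ∀ n : ℕ, (n ∈ {n : ℕ | 0 < n ∧ (p : ℤ) ∣ c₀ ^ n - 1}) ↔
      0 < n ∧ (c₀ : ZMod p) ^ n = 1 := by
    intro n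
    simp only [Set.mem_setOf_eq, and_congr_right_iff]
    intro _
    rw [← ZMod.intCast_zmod_eq_zero_iff_dvd]
    push_cast
    rw [sub_eq_zero]
  set e := orderOf ((c₀ : ZMod p)) with he_def
  have he : 0 < e := hfin.orderOf_pos
  have heS : e ∈ {n : ℕ | 0 < n ∧ (p : ℤ) ∣ c₀ ^ n - 1} :=
    (hmem e).mpr ⟨he, pow_orderOf_eq_one _⟩
  have hdS : d ∈ {n : ℕ | 0 < n ∧ (p : ℤ) ∣ c₀ ^ n - 1} := by
    rw [hd]; exact Nat.sInf_mem ⟨e, heS⟩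
  have hd0 : 0 < d := hdS.1
  have hpd : (p : ℤ) ∣ c₀ ^ d - 1 := hdS.2
  have hde : e ∣ d := orderOf_dvd_iff_pow_eq_one.mpr ((hmem d).mp hdS).2
  have hd_eq : d = e :=
    le_antisymm (hd ▸ Nat.sInf_le heS) (Nat.le_of_dvd hd0 hde)
  -- c₀^d - 1 ≠ 0
  have hne : c₀ ^ d - 1 ≠ 0 := by
    intro hcon
    have h1 : c₀ ^ d = 1 := by linarith [hcon]
    have h2 : (2 : ℤ) ≤ |c₀ ^ d| := by
      rw [abs_pow]
      calc (2 : ℤ) ≤ |c₀| := hc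
        _ ≤ |c₀| ^ d := le_self_pow₀ (by linarith) hd0.ne'
    rw [h1] at h2; simp at h2
  -- t ≥ 1
  have ht1 : 1 ≤ t := by
    rw [ht]
    rcases (padicValInt_dvd_iff 1 (c₀ ^ d - 1)).mp (by simpa using hpd) with h0 | h1
    · exact absurd h0 hne
    · exact h1
  have hk1 : 1 ≤ k := le_trans ht1 hk
  -- emultiplicity of c₀^d - 1 is t
  have hemul_t : emultiplicity ((p : ℤ)) (c₀ ^ d - 1) = (t : ℕ∞) := by
    rw [ht, ← Int.emultiplicity_natAbs,
      ← padicValNat_eq_emultiplicity (Int.natAbs_ne_zero.mpr hne)]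
    rfl
  -- key arithmetic lemma
  have key : ∀ m : ℕ, 0 < m → ((p : ℤ)) ^ k ∣ c₀ ^ m - 1 → p ^ (k - t) ≤ m := by
    intro m hm hdvd
    have hdm : d ∣ m := by
      rw [hd_eq]
      apply orderOf_dvd_iff_pow_eq_one.mpr
      exact ((hmem m).mp ⟨hm, dvd_trans (dvd_pow_self (p : ℤ) (by omega)) hdvd⟩).2
    obtain ⟨q, rfl⟩ := hdm
    have hq0 : 0 < q := Nat.pos_of_ne_zero (by rintro rfl; simp at hm)
    have hcd : ¬ (p : ℤ) ∣ c₀ ^ d := fun h => hpc (hpZ.dvd_of_dvd_pow h)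
    have lte := Int.emultiplicity_pow_sub_pow hp hodd hpd hcd q
    rw [one_pow, ← pow_mul] at lte
    have hk_le : (k : ℕ∞) ≤ emultiplicity ((p : ℤ)) (c₀ ^ (d * q) - 1) :=
      le_emultiplicity_of_pow_dvd hdvd
    rw [lte, hemul_t, ← padicValNat_eq_emultiplicity hq0.ne'] at hk_le
    have hk_le' : k ≤ t + padicValNat p q := by exact_mod_cast hk_le
    have hdvdq : p ^ (k - t) ∣ q :=
      dvd_trans (pow_dvd_pow p (by omega)) pow_padicValNat_dvd
    calc p ^ (k - t) ≤ q := Nat.le_of_dvd hq0 hdvdq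
      _ ≤ d * q := Nat.le_mul_of_pos_left q hd0
  -- description of orbit points
  have hpoint : ∀ n : ℤ, n • v = (((n : ℝ) / ((p ^ k : ℕ) : ℝ) : ℝ) : AddCircle (1 : ℝ)) := by
    intro n
    rw [hv, ← AddCircle.coe_zsmul]
    congr 1
    rw [zsmul_eq_mul]
    push_cast
    rw [div_eq_mul_inv]
  -- periodicity criterion
  have hsmul_iff : ∀ m : ℕ, ((c₀ ^ m : ℤ) • v = v) ↔ ((p : ℤ)) ^ k ∣ c₀ ^ m - 1 := by
    intro m
    have h1 : v = (((1 : ℤ) : ℝ) / ((p ^ k : ℕ) : ℝ) : ℝ) := by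
      rw [← one_zsmul v, hpoint]
    rw [hpoint (c₀ ^ m), h1]
    rw [← sub_eq_zero, ← AddCircle.coe_sub, div_sub_div_same, ← Int.cast_sub]
    rw [circ_zero_iff (p ^ k) hNpos (c₀ ^ m - 1)]
    push_cast
    rfl
  -- existence of a period
  haveI : NeZero (p ^ k) := ⟨hNpos.ne'⟩
  have hUnit : IsUnit ((c₀ : ZMod (p ^ k))) := by
    obtain ⟨a, b, hab⟩ := hcop.pow_right (n := k)
    refine IsUnit.of_mul_eq_one (a : ZMod (p ^ k)) ?_
    have hcast := congrArg (fun z : ℤ => ((z : ZMod (p ^ k)) : ZMod (p ^ k))) hab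
    push_cast at hcast
    have hp0 : ((p : ZMod (p ^ k))) ^ k = 0 := by
      have : (((p ^ k : ℕ) : ZMod (p ^ k))) = 0 := ZMod.natCast_self _
      push_cast at this
      exact this
    rw [hp0, mul_zero, add_zero] at hcast
    rw [mul_comm]
    exact hcast
  obtain ⟨m₀, hm₀pos, hm₀⟩ : ∃ m : ℕ, 0 < m ∧ ((p : ℤ)) ^ k ∣ c₀ ^ m - 1 := by
    refine ⟨orderOf hUnit.unit, orderOf_pos _, ?_⟩
    have hw : ((c₀ : ZMod (p ^ k))) ^ (orderOf hUnit.unit) = 1 := by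
      have := pow_orderOf_eq_one hUnit.unit
      have := congrArg (Units.val) this
      rw [Units.val_pow_eq_pow_val, hUnit.unit_spec] at this
      simpa using this
    have : (((c₀ ^ (orderOf hUnit.unit) - 1 : ℤ)) : ZMod (p ^ k)) = 0 := by
      push_cast
      rw [sub_eq_zero]
      exact hw
    rw [ZMod.intCast_zmod_eq_zero_iff_dvd] at this
    push_cast at this
    exact this
  have hex : ∃ m : ℕ, 0 < m ∧ (c₀ ^ m : ℤ) • v = v :=
    ⟨m₀, hm₀pos, (hsmul_iff m₀).mpr hm₀⟩
  -- T is in the set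
  have hTS : 0 < T ∧ (c₀ ^ T : ℤ) • v = v := by
    rw [hT]; exact Nat.sInf_mem hex
  have hTlb : p ^ (k - t) ≤ T := key T hTS.1 ((hsmul_iff T).mp hTS.2)
  -- separation of distinct orbit points
  have hsep : ∀ i j : ℕ, (c₀ ^ i : ℤ) • v ≠ (c₀ ^ j : ℤ) • v →
      ((p : ℝ) ^ k)⁻¹ ≤ dist ((c₀ ^ i : ℤ) • v) ((c₀ ^ j : ℤ) • v) := by
    intro i j hne'
    rw [dist_eq_norm]
    have hdiff : (c₀ ^ i : ℤ) • v - (c₀ ^ j : ℤ) • v =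
        ((((c₀ ^ i - c₀ ^ j : ℤ) : ℝ) / ((p ^ k : ℕ) : ℝ) : ℝ) : AddCircle (1 : ℝ)) := by
      rw [hpoint (c₀ ^ i), hpoint (c₀ ^ j), ← AddCircle.coe_sub, div_sub_div_same,
        ← Int.cast_sub]
    have hndvd : ¬ ((p ^ k : ℕ) : ℤ) ∣ (c₀ ^ i - c₀ ^ j) := by
      intro hdvd
      apply hne'
      rw [← sub_eq_zero, hdiff]
      exact (circ_zero_iff _ hNpos _).mpr hdvd
    have := circ_norm_lb (p ^ k) hNpos _ hndvd
    rw [hdiff]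
    calc ((p : ℝ) ^ k)⁻¹ = (((p ^ k : ℕ) : ℝ))⁻¹ := by push_cast; ring
      _ ≤ _ := this
  -- lower bound for dO
  have hdOlb : ((p : ℝ) ^ k)⁻¹ ≤ dO := by
    rw [hdO]
    obtain ⟨i, j, hij⟩ := hnontriv
    have hmemS : dist ((c₀ ^ i : ℤ) • v) ((c₀ ^ j : ℤ) • v) ∈
        {r : ℝ | ∃ i j : ℕ, (c₀ ^ i : ℤ) • v ≠ (c₀ ^ j : ℤ) • v ∧
          r = dist ((c₀ ^ i : ℤ) • v) ((c₀ ^ j : ℤ) • v)} := ⟨i, j, hij, rfl⟩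
    apply le_csInf ⟨_, hmemS⟩
    rintro r ⟨i', j', hne', rfl⟩
    exact hsep i' j' hne'
  have hppos' : (0 : ℝ) < (p : ℝ) := by exact_mod_cast hppos
  have hTlb' : (p : ℝ) ^ (k - t) ≤ (T : ℝ) := by exact_mod_cast hTlb
  refine ⟨hex, hTlb', hdOlb, ?_⟩
  have hpow : (p : ℝ) ^ (k - t) * (p : ℝ) ^ t = (p : ℝ) ^ k := by
    rw [← pow_add]; congr 1; omega
  have h1 : ((p : ℝ) ^ k)⁻¹ * (p : ℝ) ^ (k - t) ≤ dO * T := by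
    apply mul_le_mul hdOlb hTlb' (by positivity)
    exact le_trans (by positivity) hdOlb
  calc ((p : ℝ) ^ t)⁻¹ = ((p : ℝ) ^ k)⁻¹ * (p : ℝ) ^ (k - t) := by
        rw [← hpow]; field_simp
    _ ≤ dO * T := h1
end

section
/- Let B be an n × n integer matrix whose characteristic polynomial is irreducible over ℚ, let p be a prime, k ≥ 1, and let w ∈ ℤⁿ and b ∈ ℤ satisfy Bw ≡ bw mod p^k with w ≢ 0 mod p. Define a ∈ ℤⁿ with entries |a_i| < p^k/2 representing B^i w − B^j w mod p^k for some 0 ≤ j < i. If a ≠ 0, then |det(a, Ba, B²a, …, B^{n−1}a)| ≥ p^{k(n−1)}. -/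
open Matrix Polynomial

private lemma aux_det_ne_zero (n : ℕ) (hn : 0 < n) (B : Matrix (Fin n) (Fin n) ℤ)
    (hirr : Irreducible (B.charpoly.map (Int.castRingHom ℚ)))
    (a : Fin n → ℤ) (ha : a ≠ 0) :
    (Matrix.of fun s t : Fin n => (B ^ (t : ℕ)).mulVec a s).det ≠ 0 := by
  set Bq : Matrix (Fin n) (Fin n) ℚ := B.map (Int.castRingHom ℚ) with hBq
  set aq : Fin n → ℚ := fun s => (a s : ℚ) with haq
  have hcast : ∀ (t : ℕ) (s : Fin n), (Bq ^ t).mulVec aq s = ((B ^ t).mulVec a s : ℚ) := by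
    intro t s
    have : Bq ^ t = (B ^ t).map (Int.castRingHom ℚ) := by
      rw [hBq, ← RingHom.mapMatrix_apply, ← RingHom.mapMatrix_apply, map_pow]
    rw [this]
    simp [Matrix.mulVec, dotProduct, haq]
  intro h0
  have hq0 : (Matrix.of fun s t : Fin n => (Bq ^ (t : ℕ)).mulVec aq s).det = 0 := by
    have : (Matrix.of fun s t : Fin n => (Bq ^ (t : ℕ)).mulVec aq s)
        = ((Matrix.of fun s t : Fin n => (B ^ (t : ℕ)).mulVec a s).map (Int.castRingHom ℚ)) := by
      ext s t; simp [hcast]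
    rw [this, ← RingHom.mapMatrix_apply, ← RingHom.map_det, h0, map_zero]
  obtain ⟨v, hv0, hv⟩ := (Matrix.exists_mulVec_eq_zero_iff).2 hq0
  -- q(X) = ∑ v t X^t
  set q : ℚ[X] := ∑ t : Fin n, Polynomial.C (v t) * X ^ (t : ℕ) with hqdef
  have hcoeff : ∀ t : Fin n, q.coeff (t : ℕ) = v t := by
    intro t
    rw [hqdef, Polynomial.finset_sum_coeff]
    simp only [Polynomial.coeff_C_mul, Polynomial.coeff_X_pow]
    rw [Finset.sum_eq_single t]
    · simp
    · intro t' _ hne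
      rw [if_neg (fun h => hne (Fin.ext h.symm)), mul_zero]
    · simp
  have hqne : q ≠ 0 := by
    obtain ⟨t, ht⟩ := Function.ne_iff.1 hv0
    intro h
    rw [h] at hcoeff
    exact ht (by simpa using (hcoeff t).symm)
  have hdeg : q.natDegree < n := by
    have : q.natDegree ≤ n - 1 := by
      apply Polynomial.natDegree_sum_le_of_forall_le
      intro t _
      refine le_trans (Polynomial.natDegree_C_mul_le _ _) ?_
      simpa using Nat.le_sub_one_of_lt t.isLt
    omega
  have hchar : Bq.charpoly = B.charpoly.map (Int.castRingHom ℚ) := Matrix.charpoly_map B _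
  have hirr' : Irreducible Bq.charpoly := hchar ▸ hirr
  have hndvd : ¬ Bq.charpoly ∣ q := by
    intro hd
    have := Polynomial.natDegree_le_of_dvd hd hqne
    rw [Matrix.charpoly_natDegree_eq_dim] at this
    simp [Fintype.card_fin] at this
    omega
  obtain ⟨u, v', huv⟩ := (hirr'.coprime_iff_not_dvd.2 hndvd)
  -- evaluate at Bq
  have hqB : (Polynomial.aeval Bq q).mulVec aq = 0 := by
    have h1 : Polynomial.aeval Bq q = ∑ t : Fin n, v t • Bq ^ (t : ℕ) := by
      rw [hqdef, map_sum]
      refine Finset.sum_congr rfl fun t _ => ?_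
      rw [_root_.map_mul, Polynomial.aeval_C, map_pow, Polynomial.aeval_X, ← Algebra.smul_def]
    funext s
    have h3 := congrFun hv s
    simp only [Matrix.mulVec, dotProduct, Matrix.of_apply, Pi.zero_apply] at h3
    rw [h1]
    simp only [Matrix.mulVec, dotProduct, Matrix.sum_apply, Matrix.smul_apply,
      smul_eq_mul, Finset.sum_mul, Pi.zero_apply]
    rw [Finset.sum_comm, ← h3]
    refine Finset.sum_congr rfl fun t _ => ?_
    rw [Finset.sum_mul]
    refine Finset.sum_congr rfl fun r _ => ?_
    ring
  have haB : aq = 0 := by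
    have h2 : Polynomial.aeval Bq (u * Bq.charpoly + v' * q) = 1 := by
      rw [huv]; exact _root_.map_one _
    rw [map_add, _root_.map_mul, _root_.map_mul, Matrix.aeval_self_charpoly, mul_zero,
      zero_add] at h2
    calc aq = (1 : Matrix (Fin n) (Fin n) ℚ).mulVec aq := by rw [Matrix.one_mulVec]
    _ = ((Polynomial.aeval Bq v') * (Polynomial.aeval Bq q)).mulVec aq := by rw [h2]
    _ = (Polynomial.aeval Bq v').mulVec ((Polynomial.aeval Bq q).mulVec aq) := by
        rw [Matrix.mulVec_mulVec]
    _ = 0 := by rw [hqB, Matrix.mulVec_zero]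
  apply ha
  ext s
  have := congrFun haB s
  simpa [haq] using this

private lemma aux_dvd_det (n : ℕ) (hn : 0 < n) (B : Matrix (Fin n) (Fin n) ℤ) (m b : ℤ)
    (a : Fin n → ℤ)
    (hBa : ∀ (t : ℕ) (s : Fin n), m ∣ (B ^ t).mulVec a s - b ^ t * a s) :
    m ^ (n - 1) ∣ (Matrix.of fun s t : Fin n => (B ^ (t : ℕ)).mulVec a s).det := by
  classical
  set z : Fin n := ⟨0, hn⟩ with hz
  set N : Matrix (Fin n) (Fin n) ℤ := Matrix.of fun s t : Fin n => (B ^ (t : ℕ)).mulVec a s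
    with hN
  set W : Matrix (Fin n) (Fin n) ℤ :=
    Matrix.of fun r t : Fin n => if r = z ∧ ¬(t = z) then -(b ^ (t : ℕ)) else 0 with hW
  have hNz : ∀ s, N s z = a s := by
    intro s
    show (B ^ ((z : Fin n) : ℕ)).mulVec a s = a s
    rw [hz]
    simp [Matrix.one_mulVec]
  have hU : (1 + W).BlockTriangular id := by
    intro r t hlt
    have hrt : r ≠ t := (ne_of_gt hlt)
    rw [Matrix.add_apply, Matrix.one_apply_ne hrt]
    have : ¬(r = z ∧ ¬(t = z)) := by
      rintro ⟨rfl, -⟩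
      exact absurd hlt (by simp [hz, Fin.lt_def])
    simp [hW, this]
  have hdetU : (1 + W).det = 1 := by
    rw [Matrix.det_of_upperTriangular hU]
    refine Finset.prod_eq_one fun t _ => ?_
    simp [hW, Matrix.one_apply]
  have hNW : ∀ s t, (N * W) s t = if t = z then 0 else -(b ^ (t : ℕ)) * a s := by
    intro s t
    rw [Matrix.mul_apply]
    by_cases ht : t = z
    · simp [hW, ht]
    · rw [Finset.sum_eq_single z]
      · rw [if_neg ht, hNz]
        simp [hW, ht, mul_comm]
      · intro r _ hr
        simp [hW, hr]
      · simp
  -- the column-reduced matrix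
  choose d hd using fun t s => hBa t s
  have key : N * (1 + W) =
      Matrix.of fun s t : Fin n => (if t = z then 1 else m) * (if t = z then a s else d t s) := by
    ext s t
    rw [Matrix.mul_add, Matrix.mul_one, Matrix.add_apply, hNW]
    by_cases ht : t = z
    · simp only [ht, if_true, one_mul, add_zero, Matrix.of_apply]
      exact hNz s
    · simp only [ht, if_false, Matrix.of_apply]
      have := hd (t : ℕ) s
      show N s t + -(b ^ (t : ℕ)) * a s = m * d t s
      rw [← this]
      show (B ^ (t : ℕ)).mulVec a s + -(b ^ (t : ℕ)) * a s
        = (B ^ (t : ℕ)).mulVec a s - b ^ (t : ℕ) * a s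
      ring
  have hdet : N.det = m ^ (n - 1) *
      (Matrix.of fun s t : Fin n => if t = z then a s else d t s).det := by
    have h1 : N.det = (N * (1 + W)).det := by rw [Matrix.det_mul, hdetU, mul_one]
    have hdm := Matrix.det_mul_row (fun t : Fin n => if t = z then (1 : ℤ) else m)
      (Matrix.of fun s t : Fin n => if t = z then a s else d t s)
    simp only [Matrix.of_apply] at hdm
    rw [h1, key, hdm]
    congr 1
    rw [← Finset.mul_prod_erase _ _ (Finset.mem_univ z), if_pos rfl, one_mul]
    rw [Finset.prod_congr rfl (fun t ht => if_neg (Finset.mem_erase.1 ht).1),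
      Finset.prod_const, Finset.card_erase_of_mem (Finset.mem_univ z), Finset.card_univ,
      Fintype.card_fin]
  exact Dvd.intro _ hdet.symm

private lemma aux_modeq_pow (n : ℕ) (B : Matrix (Fin n) (Fin n) ℤ) (m b : ℤ) (w : Fin n → ℤ)
    (hew : ∀ s : Fin n, B.mulVec w s ≡ b * w s [ZMOD m])
    (i j : ℕ)
    (a : Fin n → ℤ)
    (hcong : ∀ s : Fin n, a s ≡ ((B ^ i).mulVec w s - (B ^ j).mulVec w s) [ZMOD m]) :
    ∀ (t : ℕ) (s : Fin n), m ∣ (B ^ t).mulVec a s - b ^ t * a s := by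
  have hmv : ∀ u v : Fin n → ℤ, (∀ s, m ∣ u s - v s) →
      ∀ s, m ∣ (B.mulVec u) s - (B.mulVec v) s := by
    intro u v h s
    have e : (B *ᵥ u) s - (B *ᵥ v) s = (B *ᵥ (u - v)) s :=
      (congrFun (Matrix.mulVec_sub B u v) s).symm
    rw [e]
    show m ∣ ∑ t, B s t * (u - v) t
    exact Finset.dvd_sum fun t _ => ((h t).mul_left _)
  -- general eigen-propagation
  have heig : ∀ u : Fin n → ℤ, (∀ s, m ∣ (B.mulVec u) s - b * u s) →
      ∀ (t : ℕ) (s : Fin n), m ∣ (B ^ t).mulVec u s - b ^ t * u s := by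
    intro u hu t
    induction t with
    | zero => intro s; simp
    | succ t ih =>
      intro s
      have e1 : (B ^ (t + 1)).mulVec u = B.mulVec ((B ^ t).mulVec u) := by
        rw [Matrix.mulVec_mulVec, ← pow_succ']
      have h1 : m ∣ (B.mulVec ((B ^ t).mulVec u)) s - (B.mulVec ((b ^ t) • u)) s :=
        hmv _ _ (fun s' => by simpa [smul_eq_mul] using ih s') s
      have e2 : B.mulVec ((b ^ t) • u) = (b ^ t) • B.mulVec u := Matrix.mulVec_smul _ _ _
      have h2 : m ∣ b ^ t * ((B.mulVec u) s - b * u s) := (hu s).mul_left _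
      have e3 : (B ^ (t + 1)).mulVec u s - b ^ (t + 1) * u s =
          ((B.mulVec ((B ^ t).mulVec u)) s - (B.mulVec ((b ^ t) • u)) s)
            + b ^ t * ((B.mulVec u) s - b * u s) := by
        rw [e1, e2]
        simp only [Pi.smul_apply, smul_eq_mul]
        ring
      rw [e3]
      exact dvd_add h1 h2
  have hw1 : ∀ s, m ∣ (B.mulVec w) s - b * w s := fun s => ((hew s).symm).dvd
  have hpow := heig w hw1
  set c : ℤ := b ^ i - b ^ j with hc
  have hca : ∀ s, m ∣ a s - c * w s := by
    intro s
    have h1 := (hcong s).dvd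
    have h2 := hpow i s
    have h3 := hpow j s
    have e : a s - c * w s =
        (((B ^ i).mulVec w s - (B ^ j).mulVec w s) - a s) * (-1)
          + ((B ^ i).mulVec w s - b ^ i * w s) - ((B ^ j).mulVec w s - b ^ j * w s) := by
      rw [hc]; ring
    rw [e]
    exact dvd_sub (dvd_add (h1.mul_right _) h2) h3
  have ha1 : ∀ s, m ∣ (B.mulVec a) s - b * a s := by
    intro s
    have h1 := hmv a (c • w) hca s
    have e2 : B.mulVec (c • w) = c • B.mulVec w := Matrix.mulVec_smul _ _ _
    have h2 : m ∣ c * ((B.mulVec w) s - b * w s) := (hw1 s).mul_left _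
    have h3 : m ∣ b * (a s - c * w s) := (hca s).mul_left _
    have e : (B.mulVec a) s - b * a s =
        ((B.mulVec a) s - (B.mulVec (c • w)) s) + c * ((B.mulVec w) s - b * w s)
          - b * (a s - c * w s) := by
      rw [e2]; simp only [Pi.smul_apply, smul_eq_mul]; ring
    rw [e]
    exact dvd_sub (dvd_add h1 h2) h3
  exact heig a ha1


/-- Let `B ∈ M_n(ℤ)` have characteristic polynomial irreducible over `ℚ`, and
let `w ∈ ℤⁿ`, `b ∈ ℤ` satisfy `Bw ≡ bw mod p^k` with `w ≢ 0 mod p`. If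
`a ∈ ℤⁿ` represents `Bⁱw - Bʲw mod p^k` with entries `|aᵢ| < p^k/2` and
`a ≠ 0`, then `|det(a, Ba, …, B^{n-1}a)| ≥ p^{k(n-1)}`. -/
theorem stmt_12 (n : ℕ) (hn : 0 < n) (B : Matrix (Fin n) (Fin n) ℤ)
    (hirr : Irreducible (B.charpoly.map (Int.castRingHom ℚ)))
    (p : ℕ) (hp : p.Prime) (k : ℕ) (hk : 1 ≤ k)
    (w : Fin n → ℤ) (b : ℤ)
    (hew : ∀ s : Fin n, B.mulVec w s ≡ b * w s [ZMOD ((p : ℤ) ^ k)])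
    (hw : ¬ ∀ s : Fin n, (p : ℤ) ∣ w s)
    (i j : ℕ) (hij : j < i)
    (a : Fin n → ℤ)
    (hbound : ∀ s : Fin n, 2 * |a s| < (p : ℤ) ^ k)
    (hcong : ∀ s : Fin n, a s ≡ ((B ^ i).mulVec w s - (B ^ j).mulVec w s) [ZMOD ((p : ℤ) ^ k)])
    (ha : a ≠ 0) :
    (p : ℤ) ^ (k * (n - 1)) ≤ |(Matrix.of fun s t : Fin n => (B ^ (t : ℕ)).mulVec a s).det| := by
  have hBa := aux_modeq_pow n B ((p : ℤ) ^ k) b w hew i j a hcong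
  have hdvd := aux_dvd_det n hn B ((p : ℤ) ^ k) b a hBa
  have hne := aux_det_ne_zero n hn B hirr a ha
  rw [pow_mul]
  exact Int.le_of_dvd (abs_pos.2 hne) ((dvd_abs _ _).2 hdvd)
end

section
/- Let f(x) = x^n − c_{n−1}x^{n−1} − ⋯ − c₀ and suppose b₁, …, b_n are integers with f(b_i) ≡ 0 mod p^k and b_i ≢ b_j mod p for i ≠ j, where p is a prime. Let {u_m} be the linear recurrence u_{m+n} = c_{n−1}u_{m+n−1} + ⋯ + c₀u_m with initial values (0, …, 0, 1). Then there exist integers r₁, …, r_n such that u_m ≡ r₁ b₁^m + r₂ b₂^m + ⋯ + r_n b_n^m mod p^k for all m ≥ 0. -/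
/-- If `b₁, …, b_n` are roots mod `p^k` of
`f(x) = xⁿ - c_{n-1}x^{n-1} - ⋯ - c₀`, pairwise distinct mod `p`, and `u` is
the linear recurrence with these coefficients and initial values `(0,…,0,1)`,
then `u_m ≡ r₁b₁^m + ⋯ + r_n b_n^m mod p^k` for some integers `rᵢ` and all `m`. -/
theorem stmt_14 (n : ℕ) (hn : 0 < n) (c : Fin n → ℤ) (p : ℕ) (hp : p.Prime)
    (k : ℕ) (hk : 1 ≤ k) (b : Fin n → ℤ)
    (hroot : ∀ i : Fin n,
      (b i) ^ n - (∑ j : Fin n, c j * (b i) ^ (j : ℕ)) ≡ 0 [ZMOD ((p : ℤ) ^ k)])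
    (hdist : ∀ i j : Fin n, i ≠ j → ¬(b i ≡ b j [ZMOD (p : ℤ)]))
    (u : ℕ → ℤ)
    (hrec : ∀ m : ℕ, u (m + n) = ∑ i : Fin n, c i * u (m + i))
    (hinit : (∀ i : ℕ, i < n - 1 → u i = 0) ∧ u (n - 1) = 1) :
    ∃ r : Fin n → ℤ, ∀ m : ℕ, u m ≡ ∑ i : Fin n, r i * (b i) ^ m [ZMOD ((p : ℤ) ^ k)] := by
  set N : ℕ := p ^ k with hN
  haveI : NeZero N := ⟨pow_ne_zero _ hp.ne_zero⟩
  have hcastN : ((N : ℕ) : ℤ) = (p : ℤ) ^ k := by rw [hN]; push_cast; ring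
  set R := ZMod N with hR
  set v : Fin n → R := fun i => ((b i : ℤ) : R) with hv
  -- each root satisfies the polynomial relation in R
  have hb : ∀ i, v i ^ n = ∑ j : Fin n, (c j : R) * v i ^ (j : ℕ) := by
    intro i
    have h := Int.modEq_zero_iff_dvd.mp (hroot i)
    rw [← hcastN] at h
    have h2 : (((b i ^ n - ∑ j : Fin n, c j * b i ^ (j : ℕ)) : ℤ) : R) = 0 :=
      (ZMod.intCast_zmod_eq_zero_iff_dvd _ N).mpr h
    push_cast at h2
    rw [Int.cast_sum] at h2
    have := sub_eq_zero.mp h2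
    simpa [hv] using this
  -- differences of roots are units in R
  have hunit : ∀ i j : Fin n, i ≠ j → IsUnit (v j - v i) := by
    intro i j hij
    have hnd : ¬ ((p : ℤ) ∣ (b j - b i)) := by
      intro hd
      exact hdist i j hij (Int.modEq_iff_dvd.mpr hd)
    have hnd' : ¬ (p ∣ (b j - b i).natAbs) := fun hd => hnd (Int.natCast_dvd.mpr hd)
    have hcop : Nat.Coprime ((b j - b i).natAbs) N := by
      rw [hN, Nat.coprime_pow_right_iff (by omega)]
      exact ((hp.coprime_iff_not_dvd).mpr hnd').symm
    have hu : IsUnit (((b j - b i).natAbs : ℕ) : R) :=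
      (ZMod.isUnit_iff_coprime _ N).mpr hcop
    have : ((b j - b i : ℤ) : R) = (v j - v i) := by push_cast [hv]; ring
    rcases Int.natAbs_eq (b j - b i) with heq | heq
    · rw [← this, heq, Int.cast_natCast]; exact hu
    · rw [← this, heq, Int.cast_neg, Int.cast_natCast]; exact hu.neg
  -- the transposed Vandermonde matrix is invertible
  set W : Matrix (Fin n) (Fin n) R := (Matrix.vandermonde v).transpose with hW
  have hdet : IsUnit W.det := by
    rw [hW, Matrix.det_transpose, Matrix.det_vandermonde]
    refine Finset.prod_induction _ IsUnit (fun a b ha hb => ha.mul hb) isUnit_one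
      (fun i _ => Finset.prod_induction _ IsUnit (fun a b ha hb => ha.mul hb) isUnit_one
        (fun j hj => hunit i j ?_))
    have : i < j := Finset.mem_Ioi.mp hj
    exact this.ne
  -- initial value vector
  set e : Fin n → R := fun i => if (i : ℕ) = n - 1 then 1 else 0 with he
  set s : Fin n → R := (W⁻¹).mulVec e with hs
  have hWs : W.mulVec s = e := by
    rw [hs, Matrix.mulVec_mulVec, Matrix.mul_nonsing_inv W hdet, Matrix.one_mulVec]
  -- key claim by strong induction
  have key : ∀ m : ℕ, ((u m : ℤ) : R) = ∑ i : Fin n, s i * v i ^ m := by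
    intro m
    induction m using Nat.strong_induction_on with
    | _ m ih =>
      rcases lt_or_ge m n with hm | hm
      · have hrow := congrFun hWs ⟨m, hm⟩
        have hWrow : ∀ j : Fin n, W ⟨m, hm⟩ j = v j ^ m := by
          intro j; simp [hW, Matrix.vandermonde]
        have : (∑ j : Fin n, v j ^ m * s j) = e ⟨m, hm⟩ := by
          simpa [Matrix.mulVec, dotProduct, hWrow] using hrow
        rw [show (∑ i : Fin n, s i * v i ^ m) = ∑ j : Fin n, v j ^ m * s j by
          exact Finset.sum_congr rfl fun j _ => mul_comm _ _, this]
        by_cases hcase : m = n - 1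
        · simp [he, hcase, hinit.2]
        · have : u m = 0 := hinit.1 m (by omega)
          simp [he, hcase, this]
      · obtain ⟨m', rfl⟩ : ∃ m', m = m' + n := ⟨m - n, by omega⟩
        rw [hrec m']
        push_cast
        erw [Int.cast_sum, Finset.sum_congr rfl fun i _ => Int.cast_mul _ _]
        have ihj : ∀ i : Fin n, ((u (m' + (i : ℕ)) : ℤ) : R)
            = ∑ j : Fin n, s j * v j ^ (m' + (i : ℕ)) := by
          intro i; exact ih _ (by have := i.2; omega)
        calc (∑ i : Fin n, (c i : R) * ((u (m' + (i : ℕ)) : ℤ) : R))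
            = ∑ i : Fin n, (c i : R) * ∑ j : Fin n, s j * v j ^ (m' + (i : ℕ)) := by
              exact Finset.sum_congr rfl fun i _ => by rw [ihj i]
          _ = ∑ j : Fin n, s j * v j ^ m' * ∑ i : Fin n, (c i : R) * v j ^ (i : ℕ) := by
              simp +zetaDelta only [Finset.mul_sum]
              rw [Finset.sum_comm]
              refine Finset.sum_congr rfl fun j _ => Finset.sum_congr rfl fun i _ => ?_
              rw [pow_add]; ring
          _ = ∑ j : Fin n, s j * v j ^ (m' + n) := by
              refine Finset.sum_congr rfl fun j _ => ?_
              rw [← hb j, pow_add]; ring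
  -- lift s to integers
  refine ⟨fun i => ((s i).val : ℤ), fun m => ?_⟩
  have hmod : ((u m : ℤ) : R) = ((∑ i : Fin n, ((s i).val : ℤ) * (b i) ^ m : ℤ) : R) := by
    rw [key m]
    push_cast
    simp +zetaDelta only [Int.cast_sum]
    refine Finset.sum_congr rfl fun i _ => ?_
    erw [Int.cast_mul, Int.cast_pow, Int.cast_natCast, ZMod.natCast_val, ZMod.cast_id]
  have := (ZMod.intCast_eq_intCast_iff _ _ N).mp hmod
  rwa [hcastN] at this
end

section
/- Let D be an m × m matrix, r ≥ 1, and let B be the rm × rm block matrix with D on the diagonal blocks, identity matrices I on the superdiagonal blocks, and zeros elsewhere. Write B = E + N where E = diag(D, …, D) and N is the nilpotent block superdiagonal part. Then EN = NE, N^r = 0, and for every polynomial h, h(B) = h(E) + h'(E)N + h''(E)N²/2! + ⋯ + h^{(r−1)}(E)N^{r−1}/(r−1)!. -/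
open Polynomial Kronecker

private lemma hasseDeriv_map' {R S : Type*} [Semiring R] [Semiring S] (f : R →+* S)
    (k : ℕ) (p : R[X]) :
    (Polynomial.hasseDeriv k p).map f = Polynomial.hasseDeriv k (p.map f) := by
  ext n
  simp [Polynomial.hasseDeriv_coeff, Polynomial.coeff_map]

/-- Taylor expansion in a commutative `ℚ`-algebra, with Hasse derivatives,
summed over any range exceeding the degree. -/
private lemma aux_taylor_comm {S : Type*} [CommRing S] [Algebra ℚ S] (e n : S) {M : ℕ}
    (h : ℚ[X]) (hM : h.natDegree < M) :
    Polynomial.aeval (e + n) h =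
      ∑ i ∈ Finset.range M, Polynomial.aeval e (Polynomial.hasseDeriv i h) * n ^ i := by
  have hdeg : (Polynomial.taylor e (h.map (algebraMap ℚ S))).natDegree < M := by
    rw [Polynomial.natDegree_taylor]
    exact lt_of_le_of_lt (Polynomial.natDegree_map_le) hM
  have hmap : Polynomial.aeval (e + n) h
      = (Polynomial.taylor e (h.map (algebraMap ℚ S))).eval n := by
    rw [Polynomial.taylor_eval, Polynomial.eval_map, ← Polynomial.aeval_def, add_comm]
  rw [hmap, Polynomial.eval_eq_sum_range' hdeg]
  refine Finset.sum_congr rfl fun i _ => ?_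
  rw [Polynomial.taylor_coeff, ← hasseDeriv_map', Polynomial.eval_map, ← Polynomial.aeval_def]

/-- Taylor expansion in a (not necessarily commutative) `ℚ`-algebra, at a sum of
commuting elements, the second of which is nilpotent. -/
private lemma aux_taylor {A : Type*} [Ring A] [Algebra ℚ A] (e n : A)
    (hc : Commute e n) (r : ℕ) (hn : n ^ r = 0) (h : ℚ[X]) :
    Polynomial.aeval (e + n) h = ∑ i ∈ Finset.range r,
      ((i.factorial : ℚ)⁻¹) • (Polynomial.aeval e (Polynomial.derivative^[i] h) * n ^ i) := by
  classical
  -- every value of `aeval e` commutes with `n`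
  have hcomm : ∀ p : ℚ[X], Commute (Polynomial.aeval e p : A) n := by
    intro p
    induction p using Polynomial.induction_on' with
    | add p q hp hq => rw [map_add]; exact hp.add_left hq
    | monomial k c =>
      rw [Polynomial.aeval_monomial]
      exact (show Commute (algebraMap ℚ A c) n from Algebra.commutes c n).mul_left
        (hc.pow_left k)
  -- the evaluation ring hom `ℚ[X][Y] → A`, `C p ↦ aeval e p`, `Y ↦ n`
  set φ : Polynomial (ℚ[X]) →+* A :=
    Polynomial.eval₂RingHom' ((Polynomial.aeval e : ℚ[X] →ₐ[ℚ] A) : ℚ[X] →+* A) n hcomm with hφ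
  have hφC : ∀ p : ℚ[X], φ (Polynomial.C p) = Polynomial.aeval e p := by
    intro p; simp [hφ, Polynomial.eval₂RingHom', Polynomial.eval₂_C]
  have hφX : φ Polynomial.X = n := by
    simp [hφ, Polynomial.eval₂RingHom', Polynomial.eval₂_X]
  -- upgrade to an algebra hom
  let φA : Polynomial (ℚ[X]) →ₐ[ℚ] A :=
    { φ with
      commutes' := fun c => by
        have : (algebraMap ℚ (Polynomial (ℚ[X]))) c
            = Polynomial.C (Polynomial.C c) := rfl
        rw [RingHom.toMonoidHom_eq_coe]
        show φ ((algebraMap ℚ (Polynomial (ℚ[X]))) c) = algebraMap ℚ A c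
        rw [this, hφC, Polynomial.aeval_C] }
  have hφAC : φA (Polynomial.C (Polynomial.X : ℚ[X])) = e := by
    rw [show φA (Polynomial.C (Polynomial.X : ℚ[X]))
      = Polynomial.aeval e (Polynomial.X : ℚ[X]) from hφC _, Polynomial.aeval_X]
  have hφAX : φA (Polynomial.X : Polynomial (ℚ[X])) = n := hφX
  set M := max r (h.natDegree + 1) with hM
  -- the universal identity in `ℚ[X][Y]`
  have key := aux_taylor_comm (Polynomial.C (Polynomial.X : ℚ[X]))
    (Polynomial.X : Polynomial (ℚ[X])) h
    (lt_of_lt_of_le (Nat.lt_succ_self _) (le_max_right r _))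
  -- push it through `φA`
  have main : Polynomial.aeval (e + n) h
      = ∑ i ∈ Finset.range M, Polynomial.aeval e (Polynomial.hasseDeriv i h) * n ^ i := by
    have h1 := congrArg φA key
    rw [← Polynomial.aeval_algHom_apply] at h1
    have h2 : φA (Polynomial.C (Polynomial.X : ℚ[X]) + Polynomial.X) = e + n := by
      rw [map_add, hφAC, hφAX]
    rw [h2] at h1
    rw [h1, map_sum]
    refine Finset.sum_congr rfl fun i _ => ?_
    rw [map_mul, map_pow, ← Polynomial.aeval_algHom_apply, hφAC, hφAX]
  -- cut the tail using nilpotency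
  have cut : ∑ i ∈ Finset.range M, Polynomial.aeval e (Polynomial.hasseDeriv i h) * n ^ i
      = ∑ i ∈ Finset.range r, Polynomial.aeval e (Polynomial.hasseDeriv i h) * n ^ i := by
    refine (Finset.sum_subset (Finset.range_subset_range.2 (le_max_left _ _)) ?_).symm
    intro i _ hi
    have : n ^ i = 0 := pow_eq_zero_of_le (by simpa using hi) hn
    rw [this, mul_zero]
  rw [main, cut]
  refine Finset.sum_congr rfl fun i _ => ?_
  have h1 : Polynomial.derivative^[i] h = i.factorial • Polynomial.hasseDeriv i h := by
    rw [← Polynomial.factorial_smul_hasseDeriv]; rfl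
  rw [h1, map_nsmul, smul_mul_assoc, ← Nat.cast_smul_eq_nsmul ℚ, smul_smul,
    inv_mul_cancel₀ (by exact_mod_cast i.factorial_ne_zero), one_smul]

private lemma shift_pow (r k : ℕ) :
    (Matrix.of (fun i j : Fin r => if (i : ℕ) + 1 = j then (1 : ℚ) else 0)) ^ k
    = Matrix.of (fun i j : Fin r => if (i : ℕ) + k = j then 1 else 0) := by
  induction k with
  | zero =>
    ext i j
    simp [Matrix.one_apply, Fin.ext_iff, eq_comm]
  | succ k ih =>
    rw [pow_succ, ih]
    ext i j
    simp only [Matrix.mul_apply, Matrix.of_apply]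
    by_cases hl : (i : ℕ) + k < r
    · rw [Finset.sum_eq_single (⟨(i : ℕ) + k, hl⟩ : Fin r)]
      · simp only [if_pos rfl, if_true, one_mul, Fin.val_mk, ← add_assoc]
      · intro b _ hb
        rw [if_neg, zero_mul]
        intro hc
        exact hb (by simp [Fin.ext_iff, ← hc])
      · simp
    · rw [Finset.sum_eq_zero, eq_comm, if_neg (by omega)]
      intro b _
      rw [if_neg (by omega), zero_mul]

/-- Let `B` be the `rm × rm` block matrix with `D` on the diagonal blocks and
identity blocks on the superdiagonal, written `B = E + N` with
`E = diag(D,…,D)` and `N` the nilpotent part. Then `EN = NE`, `N^r = 0`, and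
for every polynomial `h`,
`h(B) = ∑_{i<r} h⁽ⁱ⁾(E) Nⁱ / i!` (Taylor expansion). -/
theorem stmt_15 (m r : ℕ) (hr : 1 ≤ r) (D : Matrix (Fin m) (Fin m) ℚ)
    (B E N : Matrix (Fin r × Fin m) (Fin r × Fin m) ℚ)
    (hB : B = Matrix.of fun x y : Fin r × Fin m =>
      if x.1 = y.1 then D x.2 y.2
      else if (x.1 : ℕ) + 1 = (y.1 : ℕ) then (if x.2 = y.2 then 1 else 0) else 0)
    (hE : E = Matrix.of fun x y : Fin r × Fin m =>
      if x.1 = y.1 then D x.2 y.2 else 0)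
    (hN : N = B - E) :
    E * N = N * E ∧ N ^ r = 0 ∧
    ∀ h : Polynomial ℚ,
      Polynomial.aeval B h =
        ∑ i ∈ Finset.range r,
          ((i.factorial : ℚ)⁻¹) • (Polynomial.aeval E (Polynomial.derivative^[i] h) * N ^ i) := by
  set J : Matrix (Fin r) (Fin r) ℚ :=
    Matrix.of (fun i j : Fin r => if (i : ℕ) + 1 = j then (1 : ℚ) else 0) with hJ
  have hED : E = (1 : Matrix (Fin r) (Fin r) ℚ) ⊗ₖ D := by
    rw [hE]
    ext ⟨a, b⟩ ⟨c, d⟩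
    simp only [Matrix.of_apply, Matrix.kroneckerMap_apply, Matrix.one_apply]
    by_cases hac : a = c <;> simp [hac]
  have hNJ : N = J ⊗ₖ (1 : Matrix (Fin m) (Fin m) ℚ) := by
    rw [hN, hB, hE]
    ext ⟨a, b⟩ ⟨c, d⟩
    simp only [Matrix.sub_apply, Matrix.of_apply, Matrix.kroneckerMap_apply,
      Matrix.one_apply, hJ]
    by_cases hac : a = c
    · simp [hac, Fin.ext_iff]
    · have : ¬ ((a : ℕ) = (c : ℕ)) := by simpa [Fin.ext_iff] using hac
      by_cases h1 : (a : ℕ) + 1 = (c : ℕ) <;> by_cases hbd : b = d <;>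
        simp [hac, h1, hbd]
  have hcomm : E * N = N * E := by
    rw [hED, hNJ, ← Matrix.mul_kronecker_mul, ← Matrix.mul_kronecker_mul,
      Matrix.one_mul, Matrix.mul_one, Matrix.one_mul, Matrix.mul_one]
  have hJpow : ∀ k : ℕ, (J ⊗ₖ (1 : Matrix (Fin m) (Fin m) ℚ)) ^ k
      = (J ^ k) ⊗ₖ (1 : Matrix (Fin m) (Fin m) ℚ) := by
    intro k
    induction k with
    | zero => simp [Matrix.one_kronecker_one]
    | succ k ih =>
      rw [pow_succ, pow_succ, ih, ← Matrix.mul_kronecker_mul, Matrix.mul_one]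
  have hNr : N ^ r = 0 := by
    rw [hNJ, hJpow, hJ, shift_pow]
    have : (Matrix.of (fun i j : Fin r => if (i : ℕ) + r = j then (1 : ℚ) else 0)) = 0 := by
      ext i j
      have : ¬ ((i : ℕ) + r = j) := by omega
      simp [this]
    rw [this, Matrix.zero_kronecker]
  refine ⟨hcomm, hNr, fun h => ?_⟩
  have hBEN : B = E + N := by rw [hN]; abel
  rw [hBEN]
  exact aux_taylor E N hcomm r hNr h
end

section
/- Let A ∈ M_n(ℤ) induce an ergodic endomorphism of 𝕋ⁿ (ergodic with respect to Haar measure), and let {O_k} be a sequence of periodic orbits of A that is uniformly distributed in the metric sense, i.e., there is C > 0 with d(O_k)ⁿ T(O_k) ≥ C for all k and T(O_k) → ∞. Then the periodic measures μ_k = T(O_k)^{−1} ∑_{x ∈ O_k} δ_x converge in the weak* topology to the Haar (Lebesgue) measure on 𝕋ⁿ. -/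
open MeasureTheory Filter

open Metric

set_option maxHeartbeats 2000000
set_option synthInstance.maxHeartbeats 1000000

private lemma integral_abs_le_L2 {α : Type*} [MeasurableSpace α] {μ : Measure α}
    [IsProbabilityMeasure μ] {h : α → ℝ} (hh : MemLp h 2 μ) :
    ∫ y, |h y| ∂μ ≤ (eLpNorm h 2 μ).toReal := by
  have h1 : ∫ y, |h y| ∂μ = (eLpNorm h 1 μ).toReal := by
    rw [eLpNorm_one_eq_lintegral_enorm]
    simpa [Real.norm_eq_abs] using integral_norm_eq_lintegral_enorm hh.1
  rw [h1]
  exact ENNReal.toReal_mono hh.eLpNorm_ne_top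
    (eLpNorm_le_eLpNorm_of_exponent_le (by norm_num) hh.1)

private lemma mean_ergodic_L1 {α : Type*} [MeasurableSpace α] {μ : Measure α}
    [IsProbabilityMeasure μ] {f : α → α} (herg : Ergodic f μ)
    {g : α → ℝ} (hg : MemLp g 2 μ) {ε : ℝ} (hε : 0 < ε) :
    ∃ N : ℕ, 0 < N ∧ ∫ y, |birkhoffAverage ℝ f g N y - ∫ z, g z ∂μ| ∂μ < ε := by
  classical
  have hmp := herg.toMeasurePreserving
  set U' : Lp ℝ 2 μ →L[ℝ] Lp ℝ 2 μ :=
    (Lp.compMeasurePreservingₗᵢ (E := ℝ) (p := 2) ℝ f hmp).toContinuousLinearMap with hU'def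
  have hU : ‖U'‖ ≤ 1 :=
    (Lp.compMeasurePreservingₗᵢ (E := ℝ) (p := 2) ℝ f hmp).norm_toContinuousLinearMap_le
  set G : Lp ℝ 2 μ := hg.toLp g with hGdef
  have hGg : ⇑G =ᵐ[μ] g := hg.coeFn_toLp
  have hlim := U'.tendsto_birkhoffAverage_orthogonalProjection hU G
  set P : Lp ℝ 2 μ := ↑((Submodule.orthogonalProjectionOnto (LinearMap.eqLocus (U' : Lp ℝ 2 μ →ₗ[ℝ] Lp ℝ 2 μ) ((1 : Lp ℝ 2 μ →L[ℝ] Lp ℝ 2 μ) : Lp ℝ 2 μ →ₗ[ℝ] Lp ℝ 2 μ))) G) with hPdef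
  have hU'coe : ∀ H : Lp ℝ 2 μ, ⇑(U' H) =ᵐ[μ] ⇑H ∘ f := fun H =>
    Lp.coeFn_compMeasurePreserving H hmp
  have hcompk : ∀ (k : ℕ) {u v : α → ℝ}, u =ᵐ[μ] v → u ∘ f^[k] =ᵐ[μ] v ∘ f^[k] := by
    intro k u v huv
    have hk := hmp.iterate k
    exact ae_eq_comp hk.measurable.aemeasurable (by rwa [hk.map_eq])
  have hiter : ∀ (k : ℕ) (H : Lp ℝ 2 μ), ⇑(U'^[k] H) =ᵐ[μ] ⇑H ∘ f^[k] := by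
    intro k
    induction k with
    | zero => intro H; simp
    | succ k ih =>
      intro H
      rw [Function.iterate_succ_apply]
      refine (ih (U' H)).trans ?_
      refine (hcompk k (hU'coe H)).trans ?_
      rw [Function.iterate_succ']
      rfl
  have hsumcoe : ∀ (s : Finset ℕ) (H : ℕ → Lp ℝ 2 μ),
      ⇑(∑ k ∈ s, H k) =ᵐ[μ] fun y => ∑ k ∈ s, ⇑(H k) y := by
    intro s H
    induction s using Finset.induction_on with
    | empty => simp only [Finset.sum_empty]; exact Lp.coeFn_zero (E := ℝ) (p := 2) (μ := μ)
    | insert a s hnot ih =>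
      rw [Finset.sum_insert hnot]
      refine (Lp.coeFn_add _ _).trans ?_
      filter_upwards [ih] with y hy
      simp only [Pi.add_apply, hy, Finset.sum_insert hnot]
  have hFN : ∀ N : ℕ, ⇑(birkhoffAverage ℝ U' _root_.id N G) =ᵐ[μ] birkhoffAverage ℝ f g N := by
    intro N
    have h1 : birkhoffAverage ℝ U' _root_.id N G
        = (N : ℝ)⁻¹ • ∑ k ∈ Finset.range N, U'^[k] G := by
      simp [birkhoffAverage, birkhoffSum]
    rw [h1]
    refine (Lp.coeFn_smul _ _).trans ?_
    have h3 : ∀ᵐ y ∂μ, ∀ k ∈ Finset.range N, ⇑(U'^[k] G) y = g (f^[k] y) := by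
      rw [eventually_all_finset]
      intro k _
      exact (hiter k G).trans (hcompk k hGg)
    filter_upwards [hsumcoe (Finset.range N) (fun k => U'^[k] G), h3] with y hy2 hy3
    simp only [Pi.smul_apply, hy2, birkhoffAverage, birkhoffSum, smul_eq_mul]
    congr 1
    exact Finset.sum_congr rfl hy3
  -- P is a fixed point, hence a.e. constant
  have hPfix : U' P = P := by
    have hPmem := (Submodule.orthogonalProjectionOnto (LinearMap.eqLocus (U' : Lp ℝ 2 μ →ₗ[ℝ] Lp ℝ 2 μ) ((1 : Lp ℝ 2 μ →L[ℝ] Lp ℝ 2 μ) : Lp ℝ 2 μ →ₗ[ℝ] Lp ℝ 2 μ)) G).2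
    rw [LinearMap.mem_eqLocus] at hPmem
    simp at hPmem
    exact hPmem
  have hPval : ((P : Lp ℝ 2 μ) : α →ₘ[μ] ℝ).compMeasurePreserving f hmp = (P : α →ₘ[μ] ℝ) := by
    have h : ((U' P : Lp ℝ 2 μ) : α →ₘ[μ] ℝ) = ((P : Lp ℝ 2 μ) : α →ₘ[μ] ℝ) := congrArg _ hPfix
    exact Eq.trans (by rfl) h
  obtain ⟨c', hc'⟩ := herg.eq_const_of_compMeasurePreserving_eq hPval
  have hPc : ⇑P =ᵐ[μ] fun _ => c' := by
    have h := AEEqFun.coeFn_const α (β := ℝ) (μ := μ) c'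
    rw [← hc'] at h
    exact h
  -- integral identities
  have hgint : Integrable g μ := hg.integrable one_le_two
  have hintk : ∀ k : ℕ, ∫ y, g (f^[k] y) ∂μ = ∫ z, g z ∂μ := by
    intro k
    have hk := hmp.iterate k
    have h : ∫ z, g z ∂(Measure.map f^[k] μ) = ∫ y, g (f^[k] y) ∂μ :=
      integral_map hk.measurable.aemeasurable (by rw [hk.map_eq]; exact hg.1)
    rw [← h, hk.map_eq]
  have hintFN : ∀ N : ℕ, 0 < N → ∫ y, birkhoffAverage ℝ f g N y ∂μ = ∫ z, g z ∂μ := by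
    intro N hN
    have hki : ∀ k ∈ Finset.range N, Integrable (fun y => g (f^[k] y)) μ := by
      intro k _
      have hk := hmp.iterate k
      have := (integrable_map_measure (by rw [hk.map_eq]; exact hg.1)
        hk.measurable.aemeasurable).1 (by rwa [hk.map_eq])
      exact this
    have h1 : ∫ y, birkhoffAverage ℝ f g N y ∂μ
        = (N : ℝ)⁻¹ • ∑ k ∈ Finset.range N, ∫ y, g (f^[k] y) ∂μ := by
      simp only [birkhoffAverage, birkhoffSum]
      rw [integral_smul, integral_finset_sum _ hki]
    rw [h1]
    simp only [hintk, Finset.sum_const, Finset.card_range, nsmul_eq_mul, smul_eq_mul]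
    rw [← mul_assoc, inv_mul_cancel₀ (by positivity : (N : ℝ) ≠ 0), one_mul]
  -- L¹ distance controlled by Lp distance
  have hL1le : ∀ H K : Lp ℝ 2 μ, ∫ y, |⇑H y - ⇑K y| ∂μ ≤ dist H K := by
    intro H K
    have h2 : MemLp (⇑H - ⇑K) 2 μ := (Lp.memLp H).sub (Lp.memLp K)
    calc ∫ y, |⇑H y - ⇑K y| ∂μ = ∫ y, |(⇑H - ⇑K) y| ∂μ := rfl
      _ ≤ (eLpNorm (⇑H - ⇑K) 2 μ).toReal := integral_abs_le_L2 h2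
      _ = dist H K := (Lp.dist_def H K).symm
  have hIless : ∀ N, |(∫ y, ⇑(birkhoffAverage ℝ U' _root_.id N G) y ∂μ) - ∫ y, ⇑P y ∂μ|
      ≤ dist (birkhoffAverage ℝ U' _root_.id N G) P := by
    intro N
    set H := birkhoffAverage ℝ U' _root_.id N G with hH
    have hHint : Integrable (⇑H) μ := (Lp.memLp H).integrable one_le_two
    have hPint : Integrable (⇑P) μ := (Lp.memLp P).integrable one_le_two
    rw [← integral_sub hHint hPint]
    calc |∫ y, (⇑H y - ⇑P y) ∂μ| ≤ ∫ y, |⇑H y - ⇑P y| ∂μ := by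
          simpa [Real.norm_eq_abs] using
            norm_integral_le_integral_norm (μ := μ) (fun y => ⇑H y - ⇑P y)
      _ ≤ dist H P := hL1le H P
  have hdistto : Tendsto (fun N => dist (birkhoffAverage ℝ U' _root_.id N G) P) atTop (nhds 0) :=
    tendsto_iff_dist_tendsto_zero.1 hlim
  have hPci : ∫ y, ⇑P y ∂μ = c' := by
    rw [integral_congr_ae hPc]; simp
  have hFNi : ∀ N : ℕ, 0 < N →
      ∫ y, ⇑(birkhoffAverage ℝ U' _root_.id N G) y ∂μ = ∫ z, g z ∂μ := by
    intro N hN; rw [integral_congr_ae (hFN N)]; exact hintFN N hN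
  have hc'eq : c' = ∫ z, g z ∂μ := by
    have h1 : Tendsto (fun N => ∫ y, ⇑(birkhoffAverage ℝ U' _root_.id N G) y ∂μ) atTop
        (nhds (∫ y, ⇑P y ∂μ)) := by
      rw [tendsto_iff_dist_tendsto_zero]
      refine squeeze_zero (fun N => dist_nonneg) (fun N => ?_) hdistto
      rw [Real.dist_eq]; exact hIless N
    have h3 : (fun N => ∫ y, ⇑(birkhoffAverage ℝ U' _root_.id N G) y ∂μ)
        =ᶠ[atTop] fun _ => ∫ z, g z ∂μ := by
      filter_upwards [eventually_gt_atTop 0] with N hN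
      exact hFNi N hN
    have h4 := tendsto_nhds_unique (h1.congr' h3) tendsto_const_nhds
    rw [hPci] at h4
    exact h4
  obtain ⟨N, hN⟩ := ((hdistto.eventually (gt_mem_nhds hε)).and (eventually_gt_atTop 0)).exists
  refine ⟨N, hN.2, ?_⟩
  have hae : (fun y => |birkhoffAverage ℝ f g N y - ∫ z, g z ∂μ|) =ᵐ[μ]
      fun y => |⇑(birkhoffAverage ℝ U' _root_.id N G) y - ⇑P y| := by
    filter_upwards [hFN N, hPc] with y h1 h2
    rw [h1, h2, hc'eq]
  rw [integral_congr_ae hae]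
  exact lt_of_le_of_lt (hL1le _ _) hN.1
private lemma birkhoff_orbit_sum {α : Type*} (f : α → α) (g : α → ℝ) {x : α} {T : ℕ}
    (hx : f^[T] x = x) (N : ℕ) (hN : 0 < N) :
    ∑ i ∈ Finset.range T, birkhoffAverage ℝ f g N (f^[i] x)
      = ∑ i ∈ Finset.range T, g (f^[i] x) := by
  have aux : ∀ y : α, f^[T] y = y →
      ∑ i ∈ Finset.range T, g (f^[i] (f y)) = ∑ i ∈ Finset.range T, g (f^[i] y) := by
    intro y hy
    have h1 : ∑ i ∈ Finset.range (T+1), g (f^[i] y)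
        = (∑ i ∈ Finset.range T, g (f^[i] (f y))) + g y := by
      rw [Finset.sum_range_succ']
      simp [Function.iterate_succ_apply]
    have h2 : ∑ i ∈ Finset.range (T+1), g (f^[i] y)
        = (∑ i ∈ Finset.range T, g (f^[i] y)) + g y := by
      rw [Finset.sum_range_succ, hy]
    linarith
  have hshift : ∀ j : ℕ, ∑ i ∈ Finset.range T, g (f^[j] (f^[i] x))
      = ∑ i ∈ Finset.range T, g (f^[i] x) := by
    intro j
    induction j with
    | zero => simp
    | succ j ih =>
      have hper' : f^[T] (f^[j] x) = f^[j] x := by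
        rw [← Function.iterate_add_apply, add_comm, Function.iterate_add_apply, hx]
      have e1 : ∀ i : ℕ, f^[j+1] (f^[i] x) = f^[i] (f (f^[j] x)) := by
        intro i
        have a1 : f^[j+1] (f^[i] x) = f^[j+1+i] x := (Function.iterate_add_apply f (j+1) i x).symm
        have a2 : f^[i] (f (f^[j] x)) = f^[i+(j+1)] x := by
          rw [show f (f^[j] x) = f^[j+1] x from (Function.iterate_succ_apply' f j x).symm,
            ← Function.iterate_add_apply]
        rw [a1, a2]
        congr 1
        omega
      have e2 : ∀ i : ℕ, f^[i] (f^[j] x) = f^[j] (f^[i] x) := by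
        intro i
        rw [← Function.iterate_add_apply, ← Function.iterate_add_apply]
        congr 1
        omega
      calc ∑ i ∈ Finset.range T, g (f^[j+1] (f^[i] x))
          = ∑ i ∈ Finset.range T, g (f^[i] (f (f^[j] x))) :=
            Finset.sum_congr rfl fun i _ => by rw [e1]
        _ = ∑ i ∈ Finset.range T, g (f^[i] (f^[j] x)) := aux (f^[j] x) hper'
        _ = ∑ i ∈ Finset.range T, g (f^[j] (f^[i] x)) :=
            Finset.sum_congr rfl fun i _ => by rw [e2]
        _ = ∑ i ∈ Finset.range T, g (f^[i] x) := ih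
  simp only [birkhoffAverage, birkhoffSum, smul_eq_mul]
  rw [← Finset.mul_sum, Finset.sum_comm]
  have h3 : ∑ j ∈ Finset.range N, ∑ i ∈ Finset.range T, g (f^[j] (f^[i] x))
      = (N : ℝ) * ∑ i ∈ Finset.range T, g (f^[i] x) := by
    simp only [hshift, Finset.sum_const, Finset.card_range, nsmul_eq_mul]
  rw [h3, ← mul_assoc, inv_mul_cancel₀ (by positivity : (N:ℝ) ≠ 0), one_mul]

/-- If `A ∈ M_n(ℤ)` induces an ergodic endomorphism of the torus
`𝕋ⁿ = (ℝ/ℤ)ⁿ` and `(xₖ)` is a sequence of periodic points with minimal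
periods `Tₖ → ∞` whose orbits `Oₖ` are uniformly distributed in the metric
sense (`d(Oₖ)ⁿ Tₖ ≥ C > 0`), then the periodic measures (uniform measures on
the orbits) converge weak* to the Haar (Lebesgue) probability measure, i.e.
the orbit averages of every continuous function converge to its integral. -/
theorem stmt_17 (n : ℕ) (hn : 0 < n) (A : Matrix (Fin n) (Fin n) ℤ)
    (hdet : A.det ≠ 0)
    (f : (Fin n → AddCircle (1 : ℝ)) → (Fin n → AddCircle (1 : ℝ)))
    (hf : f = fun x i => ∑ j : Fin n, A i j • x j)
    (herg : Ergodic f volume)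
    (x : ℕ → (Fin n → AddCircle (1 : ℝ))) (T : ℕ → ℕ)
    (hTpos : ∀ k, 0 < (T k))
    (hper : ∀ k, f^[T k] (x k) = x k)
    (hmin : ∀ k, ∀ t : ℕ, 0 < t → f^[t] (x k) = x k → T k ≤ t)
    (d : ℕ → ℝ)
    (hd : ∀ k, d k = sInf {r : ℝ | ∃ i j : ℕ, f^[i] (x k) ≠ f^[j] (x k) ∧
      r = dist (f^[i] (x k)) (f^[j] (x k))})
    (C : ℝ) (hC : 0 < C)
    (hUD : ∀ k, C ≤ (d k) ^ n * (T k))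
    (hTinf : Tendsto T atTop atTop) :
    ∀ g : C((Fin n → AddCircle (1 : ℝ)), ℝ),
      Tendsto (fun k => (∑ i ∈ Finset.range (T k), g (f^[i] (x k))) / (T k))
        atTop (nhds (∫ y, g y ∂volume)) := by
  intro g
  haveI : IsProbabilityMeasure (volume : Measure (AddCircle (1:ℝ))) := ⟨by simp⟩
  haveI : IsProbabilityMeasure (volume : Measure (Fin n → AddCircle (1:ℝ))) := inferInstance
  have hfc : Continuous f := by
    rw [hf]
    exact continuous_pi fun i => continuous_finset_sum _ fun j _ =>
      (continuous_zsmul (A i j)).comp (continuous_apply j)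
  have hmemLp : ∀ ψ : (Fin n → AddCircle (1:ℝ)) → ℝ, Continuous ψ → MemLp ψ 2 volume := by
    intro ψ hψ
    obtain ⟨b, hb⟩ := (isCompact_range hψ.norm).bddAbove
    exact MemLp.of_bound hψ.aestronglyMeasurable b (ae_of_all _ fun y => hb ⟨y, rfl⟩)
  have hvol : ∀ (y : Fin n → AddCircle (1:ℝ)) (r : ℝ), 0 ≤ r →
      volume (Metric.closedBall y r) = ENNReal.ofReal (min 1 (2*r)) ^ n := by
    intro y r hr
    rw [closedBall_pi y hr, volume_pi_pi]
    simp [AddCircle.volume_closedBall]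
  set c := ∫ y, (g : (Fin n → AddCircle (1:ℝ)) → ℝ) y ∂volume with hcdef
  rw [Metric.tendsto_atTop]
  intro ε hε
  set ε' := (ε/4) * C * ((2:ℝ)/3)^n with hε'def
  have hε'pos : 0 < ε' := by positivity
  obtain ⟨N, hN0, hNint⟩ := mean_ergodic_L1 herg (hmemLp _ g.continuous) hε'pos
  set ψ : (Fin n → AddCircle (1:ℝ)) → ℝ :=
    fun y => birkhoffAverage ℝ f (⇑g) N y - c with hψdef
  have hψc : Continuous ψ := by
    refine Continuous.sub ?_ continuous_const
    unfold birkhoffAverage birkhoffSum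
    exact Continuous.const_smul
      (continuous_finset_sum _ fun j _ => g.continuous.comp (hfc.iterate j)) ((N : ℝ)⁻¹)
  have hψint : ∫ y, |ψ y| ∂volume < ε' := hNint
  have hψL1 : Integrable (fun y => |ψ y|) volume := ((hmemLp ψ hψc).integrable one_le_two).abs
  obtain ⟨δ, hδpos, hδ⟩ := Metric.uniformContinuous_iff.1
    (CompactSpace.uniformContinuous_of_continuous hψc) (ε/4) (by positivity)
  obtain ⟨m, hm⟩ := exists_nat_gt ((min (2*δ) 1)⁻¹ ^ n)
  obtain ⟨K, hK⟩ := eventually_atTop.1 (hTinf.eventually_ge_atTop (max 2 (m+1)))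
  refine ⟨K, fun k hk => ?_⟩
  have hT2 : 2 ≤ T k := le_trans (le_max_left _ _) (hK k hk)
  have hTm : m + 1 ≤ T k := le_trans (le_max_right _ _) (hK k hk)
  have hTkR : (0:ℝ) < T k := by exact_mod_cast hTpos k
  -- distinctness of orbit points
  have hdistinct : ∀ i, i < T k → ∀ j, j < T k → i ≠ j →
      f^[i] (x k) ≠ f^[j] (x k) := by
    have key : ∀ i j, i < j → j < T k → f^[i] (x k) = f^[j] (x k) → False := by
      intro i j hij hj heq
      have h2 : f^[T k - j] (f^[j] (x k)) = x k := by
        rw [← Function.iterate_add_apply, Nat.sub_add_cancel hj.le]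
        exact hper k
      have h1 : f^[T k - j + i] (x k) = x k := by
        calc f^[T k - j + i] (x k) = f^[T k - j] (f^[i] (x k)) :=
              Function.iterate_add_apply f (T k - j) i (x k)
          _ = f^[T k - j] (f^[j] (x k)) := by rw [heq]
          _ = x k := h2
      have := hmin k (T k - j + i) (by omega) h1
      omega
    intro i hi j hj hij
    rcases hij.lt_or_gt with h | h
    · exact fun heq => key i j h hj heq
    · exact fun heq => key j i h hi heq.symm
  -- minimal distance facts
  have hperq : ∀ q : ℕ, f^[T k * q] (x k) = x k := by
    intro q; rw [Function.iterate_mul]; exact Function.IsFixedPt.iterate (hper k) q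
  have hmodp : ∀ i : ℕ, f^[i] (x k) = f^[i % T k] (x k) := by
    intro i
    conv_lhs => rw [← Nat.mod_add_div i (T k)]
    rw [Function.iterate_add_apply, hperq]
  have hSfin : {r : ℝ | ∃ i j : ℕ, f^[i] (x k) ≠ f^[j] (x k) ∧
      r = dist (f^[i] (x k)) (f^[j] (x k))}.Finite := by
    refine Set.Finite.subset (Set.finite_range
      (fun q : Fin (T k) × Fin (T k) =>
        dist (f^[(q.1 : ℕ)] (x k)) (f^[(q.2 : ℕ)] (x k)))) ?_
    rintro r ⟨i, j, hne, rfl⟩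
    exact ⟨(⟨i % T k, Nat.mod_lt _ (hTpos k)⟩, ⟨j % T k, Nat.mod_lt _ (hTpos k)⟩),
      by simp only [← hmodp]⟩
  have hSne : {r : ℝ | ∃ i j : ℕ, f^[i] (x k) ≠ f^[j] (x k) ∧
      r = dist (f^[i] (x k)) (f^[j] (x k))}.Nonempty :=
    ⟨dist (f^[0] (x k)) (f^[1] (x k)), 0, 1,
      hdistinct 0 (by omega) 1 (by omega) (by omega), rfl⟩
  have hdmem : d k ∈ {r : ℝ | ∃ i j : ℕ, f^[i] (x k) ≠ f^[j] (x k) ∧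
      r = dist (f^[i] (x k)) (f^[j] (x k))} := by
    rw [hd k]; exact hSne.csInf_mem hSfin
  have hdpos : 0 < d k := by
    obtain ⟨i, j, hne, heq⟩ := hdmem
    rw [heq]; exact dist_pos.2 hne
  have hdle : ∀ i j : ℕ, f^[i] (x k) ≠ f^[j] (x k) →
      d k ≤ dist (f^[i] (x k)) (f^[j] (x k))  := by
    intro i j hne
    rw [hd k]
    exact csInf_le hSfin.bddBelow ⟨i, j, hne, rfl⟩
  -- packing bound with radius r' = min (d k / 3) (1/2)
  set r' : ℝ := min (d k / 3) (1/2) with hr'def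
  have hr'pos : 0 < r' := lt_min (by positivity) (by norm_num)
  have hdisj : ∀ i, i ∈ Finset.range (T k) → ∀ j, j ∈ Finset.range (T k) → i ≠ j →
      Disjoint (Metric.closedBall (f^[i] (x k)) r') (Metric.closedBall (f^[j] (x k)) r') := by
    intro i hi j hj hij
    refine Metric.closedBall_disjoint_closedBall ?_
    have hne := hdistinct i (Finset.mem_range.1 hi) j (Finset.mem_range.1 hj) hij
    have h1 := hdle i j hne
    have h2 : r' ≤ d k / 3 := min_le_left _ _
    linarith
  have hpack : (T k : ℝ) * (min 1 (2*r'))^n ≤ 1 := by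
    have hmeas : ∀ i ∈ Finset.range (T k),
        MeasurableSet (Metric.closedBall (f^[i] (x k)) r') :=
      fun i _ => measurableSet_closedBall
    have hunion := measure_biUnion_finset (μ := volume)
      (s := Finset.range (T k)) (f := fun i => Metric.closedBall (f^[i] (x k)) r')
      (fun i hi j hj hij => hdisj i hi j hj hij) hmeas
    have hle : volume (⋃ i ∈ Finset.range (T k), Metric.closedBall (f^[i] (x k)) r') ≤ 1 := by
      refine le_trans (measure_mono (Set.subset_univ _)) ?_
      simp
    rw [hunion] at hle
    have hveach : ∀ i ∈ Finset.range (T k),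
        volume (Metric.closedBall (f^[i] (x k)) r') = ENNReal.ofReal (min 1 (2*r')) ^ n :=
      fun i _ => hvol _ _ hr'pos.le
    rw [Finset.sum_congr rfl hveach, Finset.sum_const, Finset.card_range, nsmul_eq_mul] at hle
    have := ENNReal.toReal_mono ENNReal.one_ne_top hle
    rw [ENNReal.toReal_mul, ENNReal.toReal_pow, ENNReal.toReal_ofReal (by positivity),
      ENNReal.toReal_natCast, ENNReal.toReal_one] at this
    exact this
  -- consequences of packing
  have hminlt : min 1 (2*r') < 1 := by
    by_contra hcon
    push_neg at hcon
    have h1 : min 1 (2*r') = 1 := le_antisymm (min_le_left _ _) hcon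
    rw [h1, one_pow] at hpack
    have h2 : (2:ℝ) ≤ T k := by exact_mod_cast hT2
    linarith
  have h2r' : 2*r' < 1 := by
    by_contra hcon
    push_neg at hcon
    rw [min_eq_left hcon] at hminlt
    exact lt_irrefl _ hminlt
  have hd3 : d k / 3 < 1/2 := by
    by_contra hcon
    push_neg at hcon
    rw [hr'def, min_eq_right hcon] at h2r'
    norm_num at h2r'
  have hr'eq : r' = d k / 3 := min_eq_left (by linarith)
  have hpackd : (T k : ℝ) * (2*r')^n ≤ 1 := by
    rwa [min_eq_right h2r'.le] at hpack
  set v : ℝ := (2*r')^n with hvdef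
  have hvpos : 0 < v := by positivity
  -- r' is small
  have hdsmall : r' < δ := by
    by_contra hcon
    push_neg at hcon
    have hmin2 : min (2*δ) 1 ≤ 2*r' := le_trans (min_le_left _ _) (by linarith)
    have hminpos : 0 < min (2*δ) 1 := lt_min (by positivity) one_pos
    have hpow : (min (2*δ) 1)^n ≤ (2*r')^n := pow_le_pow_left₀ hminpos.le hmin2 n
    have hT1 : (T k : ℝ) * (min (2*δ) 1)^n ≤ 1 :=
      le_trans (mul_le_mul_of_nonneg_left hpow hTkR.le) hpackd
    have hp : (0:ℝ) < (min (2*δ) 1)^n := by positivity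
    have hT2' : (T k : ℝ) ≤ (min (2*δ) 1)⁻¹ ^ n := by
      have h := (le_div_iff₀ hp).2 hT1
      rwa [one_div, ← inv_pow] at h
    have hmr : ((m:ℝ)+1) ≤ (T k : ℝ) := by exact_mod_cast hTm
    linarith
  -- ball volumes (real)
  have hvolB : ∀ y : Fin n → AddCircle (1:ℝ),
      (volume (Metric.closedBall y r')).toReal = v := by
    intro y
    rw [hvol y r' hr'pos.le, min_eq_right h2r'.le, ENNReal.toReal_pow,
      ENNReal.toReal_ofReal (by positivity)]
  -- lower bound on T * v
  have hTv : ((2:ℝ)/3)^n * C ≤ (T k : ℝ) * v := by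
    have h1 : ((2:ℝ)/3)^n * C ≤ ((2:ℝ)/3)^n * ((d k)^n * (T k : ℝ)) :=
      mul_le_mul_of_nonneg_left (hUD k) (by positivity)
    have h2 : ((2:ℝ)/3)^n * ((d k)^n * (T k : ℝ)) = (T k : ℝ) * v := by
      rw [hvdef, hr'eq, show 2*(d k/3) = (2/3) * d k by ring, mul_pow]
      ring
    linarith
  -- per-ball estimate
  have hball : ∀ i ∈ Finset.range (T k),
      |ψ (f^[i] (x k))| * v
        ≤ (∫ y in Metric.closedBall (f^[i] (x k)) r', |ψ y| ∂volume) + v * (ε/4) := by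
    intro i _
    have h2 : ∀ y ∈ Metric.closedBall (f^[i] (x k)) r', |ψ (f^[i] (x k))| ≤ |ψ y| + ε/4 := by
      intro y hy
      have hdy : dist (f^[i] (x k)) y < δ := by
        rw [Metric.mem_closedBall] at hy
        rw [dist_comm]
        exact lt_of_le_of_lt hy hdsmall
      have h3 := hδ hdy
      rw [Real.dist_eq] at h3
      have h4 := abs_sub_abs_le_abs_sub (ψ (f^[i] (x k))) (ψ y)
      linarith
    have hconst : IntegrableOn (fun _ => |ψ (f^[i] (x k))|)
        (Metric.closedBall (f^[i] (x k)) r') volume :=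
      integrableOn_const (measure_lt_top _ _).ne
    have hint2 : IntegrableOn (fun y => |ψ y| + ε/4)
        (Metric.closedBall (f^[i] (x k)) r') volume :=
      hψL1.integrableOn.add (integrableOn_const (measure_lt_top _ _).ne)
    calc |ψ (f^[i] (x k))| * v
        = ∫ _ in Metric.closedBall (f^[i] (x k)) r', |ψ (f^[i] (x k))| ∂volume := by
          rw [setIntegral_const, smul_eq_mul, measureReal_def, hvolB, mul_comm]
      _ ≤ ∫ y in Metric.closedBall (f^[i] (x k)) r', (|ψ y| + ε/4) ∂volume :=
          setIntegral_mono_on hconst hint2 measurableSet_closedBall h2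
      _ = (∫ y in Metric.closedBall (f^[i] (x k)) r', |ψ y| ∂volume) + v * (ε/4) := by
          rw [integral_add hψL1.integrableOn
            (integrableOn_const (measure_lt_top _ _).ne)]
          congr 1
          rw [setIntegral_const, smul_eq_mul, measureReal_def, hvolB]
  -- summing
  have hsum : (∑ i ∈ Finset.range (T k), |ψ (f^[i] (x k))|) * v
      ≤ (∫ y, |ψ y| ∂volume) + (T k : ℝ) * (v * (ε/4)) := by
    have h1 := Finset.sum_le_sum hball
    rw [← Finset.sum_mul] at h1
    have h2 : ∑ i ∈ Finset.range (T k),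
        ((∫ y in Metric.closedBall (f^[i] (x k)) r', |ψ y| ∂volume) + v * (ε/4))
        = (∑ i ∈ Finset.range (T k),
            ∫ y in Metric.closedBall (f^[i] (x k)) r', |ψ y| ∂volume)
          + (T k : ℝ) * (v * (ε/4)) := by
      rw [Finset.sum_add_distrib, Finset.sum_const, Finset.card_range, nsmul_eq_mul]
    have h3 : ∑ i ∈ Finset.range (T k),
        ∫ y in Metric.closedBall (f^[i] (x k)) r', |ψ y| ∂volume
        ≤ ∫ y, |ψ y| ∂volume := by
      rw [← integral_biUnion_finset (Finset.range (T k)) (fun i _ => measurableSet_closedBall)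
        (fun i hi j hj hij => hdisj i (Finset.mem_coe.1 hi) j (Finset.mem_coe.1 hj) hij)
        (fun i _ => hψL1.integrableOn)]
      exact setIntegral_le_integral hψL1 (ae_of_all _ fun y => abs_nonneg _)
    linarith
  -- final computation
  have hInonneg : 0 ≤ ∫ y, |ψ y| ∂volume := integral_nonneg fun y => abs_nonneg _
  have hshifted := birkhoff_orbit_sum f (⇑g) (hper k) N hN0
  have hrepr : (∑ i ∈ Finset.range (T k), g (f^[i] (x k))) / (T k) - c
      = (∑ i ∈ Finset.range (T k), ψ (f^[i] (x k))) / (T k) := by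
    have h1 : ∑ i ∈ Finset.range (T k), ψ (f^[i] (x k))
        = (∑ i ∈ Finset.range (T k), g (f^[i] (x k))) - (T k : ℝ) * c := by
      calc ∑ i ∈ Finset.range (T k), ψ (f^[i] (x k))
          = (∑ i ∈ Finset.range (T k), birkhoffAverage ℝ f (⇑g) N (f^[i] (x k)))
            - (T k : ℝ) * c := by
            rw [Finset.sum_sub_distrib, Finset.sum_const, Finset.card_range, nsmul_eq_mul]
        _ = (∑ i ∈ Finset.range (T k), g (f^[i] (x k))) - (T k : ℝ) * c := by rw [hshifted]
    rw [h1, sub_div, mul_div_cancel_left₀ _ hTkR.ne']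
  rw [Real.dist_eq, hrepr]
  have habs : |(∑ i ∈ Finset.range (T k), ψ (f^[i] (x k))) / (T k : ℝ)|
      ≤ (∑ i ∈ Finset.range (T k), |ψ (f^[i] (x k))|) / (T k : ℝ) := by
    rw [abs_div, Nat.abs_cast]
    gcongr
    exact Finset.abs_sum_le_sum_abs _ _
  have key : (∑ i ∈ Finset.range (T k), |ψ (f^[i] (x k))|) / (T k : ℝ) ≤ ε/4 + ε/4 := by
    set W := ∑ i ∈ Finset.range (T k), |ψ (f^[i] (x k))| with hWdef
    set I := ∫ y, |ψ y| ∂volume with hIdef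
    have e1 : W / (T k : ℝ) = (W * v) / ((T k : ℝ) * v) := by
      rw [mul_div_mul_right _ _ hvpos.ne']
    have e2 : (W * v) / ((T k : ℝ) * v)
        ≤ (I + (T k : ℝ) * (v * (ε/4))) / ((T k : ℝ) * v) :=
      (div_le_div_iff_of_pos_right (by positivity)).2 hsum
    have e3 : (I + (T k : ℝ) * (v * (ε/4))) / ((T k : ℝ) * v)
        = I / ((T k : ℝ) * v) + ε/4 := by
      rw [add_div]
      congr 1
      rw [show (T k : ℝ) * (v * (ε/4)) = (ε/4) * ((T k : ℝ) * v) by ring,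
        mul_div_assoc, div_self (by positivity : ((T k : ℝ) * v) ≠ 0), mul_one]
    have e4 : I / ((T k : ℝ) * v) ≤ I / (((2:ℝ)/3)^n * C) := by
      exact div_le_div_of_nonneg_left hInonneg (by positivity) hTv
    have e5 : I / (((2:ℝ)/3)^n * C) ≤ ε/4 := by
      rw [div_le_iff₀ (by positivity)]
      calc I ≤ ε' := hψint.le
        _ = ε/4 * (((2:ℝ)/3)^n * C) := by rw [hε'def]; ring
    calc W / (T k : ℝ) = (W * v) / ((T k : ℝ) * v) := e1
      _ ≤ (I + (T k : ℝ) * (v * (ε/4))) / ((T k : ℝ) * v) := e2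
      _ = I / ((T k : ℝ) * v) + ε/4 := e3
      _ ≤ I / (((2:ℝ)/3)^n * C) + ε/4 := by linarith
      _ ≤ ε/4 + ε/4 := by linarith
  calc |(∑ i ∈ Finset.range (T k), ψ (f^[i] (x k))) / (T k : ℝ)|
      ≤ (∑ i ∈ Finset.range (T k), |ψ (f^[i] (x k))|) / (T k : ℝ) := habs
    _ ≤ ε/4 + ε/4 := key
    _ < ε := by linarith
end

section
/- Let A ∈ M_n(ℤ) induce an endomorphism of 𝕋ⁿ that is not ergodic with respect to Haar measure, so that the characteristic polynomial of A has a root ζ which is a primitive m-th root of unity. Then no sequence of periodic measures of A (uniform measures on periodic orbits) converges in the weak* topology to the Haar measure on 𝕋ⁿ. -/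
open MeasureTheory Filter



noncomputable section
namespace S19
open Matrix

def phi {n : ℕ} (c : Fin n → ℤ) (x : Fin n → AddCircle (1:ℝ)) : AddCircle (1:ℝ) := ∑ j, c j • x j
def chi {n : ℕ} (c : Fin n → ℤ) (x : Fin n → AddCircle (1:ℝ)) : ℂ := AddCircle.toCircle (phi c x)

lemma phi_add {n : ℕ} (c c' : Fin n → ℤ) (x) : phi (c + c') x = phi c x + phi c' x := by
  simp [phi, add_smul, Finset.sum_add_distrib]

lemma phi_zero {n : ℕ} (x : Fin n → AddCircle (1:ℝ)) : phi 0 x = 0 := by simp [phi]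

lemma chi_zero {n : ℕ} (x : Fin n → AddCircle (1:ℝ)) : chi 0 x = 1 := by
  simp [chi, phi_zero]

lemma chi_add {n : ℕ} (c c' : Fin n → ℤ) (x) : chi (c + c') x = chi c x * chi c' x := by
  simp [chi, phi_add, AddCircle.toCircle_add]

lemma conj_chi {n : ℕ} (c : Fin n → ℤ) (x) : (starRingEnd ℂ) (chi c x) = chi (-c) x := by
  have h : AddCircle.toCircle (phi (-c) x) = (AddCircle.toCircle (phi c x))⁻¹ := by
    apply eq_inv_of_mul_eq_one_left
    rw [← AddCircle.toCircle_add, ← phi_add]; simp [phi_zero]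
  rw [chi, chi, h, Circle.coe_inv_eq_conj]

lemma norm_chi {n : ℕ} (c : Fin n → ℤ) (x) : ‖chi c x‖ = 1 := by simp [chi, Circle.norm_coe]

lemma normSq_chi {n : ℕ} (c : Fin n → ℤ) (x) : Complex.normSq (chi c x) = 1 := by
  rw [Complex.normSq_eq_norm_sq]
  simp [chi, Circle.norm_coe]

lemma continuous_chi {n : ℕ} (c : Fin n → ℤ) : Continuous (chi (n := n) c) := by
  unfold chi phi
  exact continuous_induced_dom.comp <| AddCircle.continuous_toCircle.comp <| by fun_prop

lemma chi_sub {n : ℕ} (c c' : Fin n → ℤ) (x) :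
    chi (c - c') x = chi c x * (starRingEnd ℂ) (chi c' x) := by
  rw [conj_chi, ← chi_add, sub_eq_add_neg]

lemma chi_term {n : ℕ} (w : Fin n → ℤ) (z1 z2 : ℤ) (u v : Fin n → AddCircle (1:ℝ)) :
    (chi (z1 • w) u * (starRingEnd ℂ) (chi (z1 • w) v)) *
      (starRingEnd ℂ) (chi (z2 • w) u * (starRingEnd ℂ) (chi (z2 • w) v))
      = chi ((z1 - z2) • w) u * (starRingEnd ℂ) (chi ((z1 - z2) • w) v) := by
  simp only [sub_smul, chi_sub, _root_.map_mul, Complex.conj_conj]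
  ring

lemma phi_map {n : ℕ} (A : Matrix (Fin n) (Fin n) ℤ) (c : Fin n → ℤ) (x) :
    phi c (fun i => ∑ j, A i j • x j) = phi (Matrix.vecMul c A) x := by
  simp only [phi, Finset.smul_sum, smul_smul]
  rw [Finset.sum_comm]
  simp [Matrix.vecMul, dotProduct, Finset.sum_smul]

lemma phi_iter {n : ℕ} (A : Matrix (Fin n) (Fin n) ℤ)
    (f : (Fin n → AddCircle (1:ℝ)) → (Fin n → AddCircle (1:ℝ)))
    (hf : f = fun x i => ∑ j : Fin n, A i j • x j) (c : Fin n → ℤ) (x) (i : ℕ) :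
    phi c (f^[i] x) = phi (Matrix.vecMul c (A ^ i)) x := by
  induction i generalizing c x with
  | zero => simp
  | succ i ih =>
    rw [Function.iterate_succ_apply, ih, hf, phi_map, Matrix.vecMul_vecMul, ← pow_succ]

lemma chi_iter {n : ℕ} (A : Matrix (Fin n) (Fin n) ℤ)
    (f : (Fin n → AddCircle (1:ℝ)) → (Fin n → AddCircle (1:ℝ)))
    (hf : f = fun x i => ∑ j : Fin n, A i j • x j) (c : Fin n → ℤ) (x) (i : ℕ) :
    chi c (f^[i] x) = chi (Matrix.vecMul c (A ^ i)) x := by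
  rw [chi, phi_iter A f hf, chi]

lemma integral_fourier_zero {k : ℤ} (hk : k ≠ 0) :
    ∫ t : AddCircle (1:ℝ), (fourier k t : ℂ) = 0 :=
  integral_eq_zero_of_add_right_eq_neg (fourier_add_half_inv_index hk one_pos)

lemma toCircle_sum {ι : Type*} (s : Finset ι) (g : ι → AddCircle (1:ℝ)) :
    (AddCircle.toCircle (∑ j ∈ s, g j) : ℂ) = ∏ j ∈ s, (AddCircle.toCircle (g j) : ℂ) := by
  classical
  induction s using Finset.induction with
  | empty => simp
  | insert _ _ h ih =>
    rw [Finset.sum_insert h, Finset.prod_insert h, AddCircle.toCircle_add, ← ih]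
    push_cast
    ring

lemma chi_eq_prod {n : ℕ} (c : Fin n → ℤ) (x : Fin n → AddCircle (1:ℝ)) :
    chi c x = ∏ j, (fourier (c j) (x j) : ℂ) := by
  rw [chi, phi, toCircle_sum]
  simp [fourier_apply]

lemma integral_chi {n : ℕ} {c : Fin n → ℤ} (hc : c ≠ 0) :
    ∫ x : Fin n → AddCircle (1:ℝ), chi c x = 0 := by
  have h : ∫ x : Fin n → AddCircle (1:ℝ), chi c x
      = ∏ j, ∫ t : AddCircle (1:ℝ), (fourier (c j) t : ℂ) := by
    rw [← MeasureTheory.integral_fintype_prod_eq_prod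
      (f := fun j (t : AddCircle (1:ℝ)) => (fourier (c j) t : ℂ))]
    exact integral_congr_ae (Filter.Eventually.of_forall fun x => chi_eq_prod c x)
  rw [h]
  obtain ⟨j, hj⟩ : ∃ j, c j ≠ 0 := by
    by_contra hcon
    push_neg at hcon
    exact hc (funext hcon)
  exact Finset.prod_eq_zero (Finset.mem_univ j) (integral_fourier_zero hj)

lemma integrable_chi {n : ℕ} (c : Fin n → ℤ) :
    Integrable (chi c) (volume : Measure (Fin n → AddCircle (1:ℝ))) := by
  exact (integrable_const (1:ℝ)).mono' (continuous_chi c).aestronglyMeasurable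
    (Filter.Eventually.of_forall fun x => le_of_eq (norm_chi c x))

lemma eval_charpoly {n : ℕ} (B : Matrix (Fin n) (Fin n) ℂ) (z : ℂ) :
    Polynomial.eval z B.charpoly = (z • (1 : Matrix (Fin n) (Fin n) ℂ) - B).det := by
  rw [Matrix.charpoly, ← Polynomial.coe_evalRingHom, RingHom.map_det]
  congr 1
  ext i j
  by_cases h : i = j <;>
    simp [h, Matrix.charmatrix_apply, Matrix.map_apply, Matrix.one_apply, Matrix.diagonal_apply]

lemma exists_w {n : ℕ} (A : Matrix (Fin n) (Fin n) ℤ) (ζ : ℂ) (m : ℕ)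
    (hζ : IsPrimitiveRoot ζ m)
    (hroot : (A.charpoly.map (Int.castRingHom ℂ)).IsRoot ζ) :
    ∃ w : Fin n → ℤ, w ≠ 0 ∧ Matrix.vecMul w (A ^ m) = w := by
  classical
  set B := A.map (Int.castRingHom ℂ) with hBdef
  have hB : Polynomial.eval ζ B.charpoly = 0 := by
    rw [Matrix.charpoly_map]; exact hroot
  rw [eval_charpoly] at hB
  obtain ⟨v, hv0, hv⟩ := (Matrix.exists_mulVec_eq_zero_iff).2 hB
  have hBv : B *ᵥ v = ζ • v := by
    rw [Matrix.sub_mulVec, Matrix.smul_mulVec, Matrix.one_mulVec, sub_eq_zero] at hv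
    exact hv.symm
  have hpow : ∀ k : ℕ, (B ^ k) *ᵥ v = ζ ^ k • v := by
    intro k
    induction k with
    | zero => simp
    | succ k ih =>
      rw [pow_succ', ← Matrix.mulVec_mulVec, ih, Matrix.mulVec_smul, hBv, smul_smul, pow_succ',
        mul_comm]
  have hBm : (B ^ m - 1) *ᵥ v = 0 := by
    rw [Matrix.sub_mulVec, hpow m, hζ.pow_eq_one, one_smul, Matrix.one_mulVec, sub_self]
  have hdetC : (B ^ m - 1).det = 0 := Matrix.exists_mulVec_eq_zero_iff.1 ⟨v, hv0, hBm⟩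
  have hmap : (B ^ m - 1) = (A ^ m - 1).map (Int.castRingHom ℂ) := by
    show _ = (Int.castRingHom ℂ).mapMatrix (A ^ m - 1)
    rw [_root_.map_sub, _root_.map_pow, _root_.map_one]
    rfl
  have hdetZ : (A ^ m - 1).det = 0 := by
    have h2 : ((Int.castRingHom ℂ) ((A ^ m - 1).det)) = 0 := by
      rw [RingHom.map_det]
      show ((A ^ m - 1).map (Int.castRingHom ℂ)).det = 0
      exact hmap ▸ hdetC
    have h3 : (((A ^ m - 1).det : ℤ) : ℂ) = 0 := h2
    exact_mod_cast h3
  obtain ⟨w, hw0, hw⟩ := Matrix.exists_vecMul_eq_zero_iff.2 hdetZ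
  refine ⟨w, hw0, ?_⟩
  rw [Matrix.vecMul_sub, Matrix.vecMul_one, sub_eq_zero] at hw
  exact hw

end S19
end

/-- If `A ∈ M_n(ℤ)` (with `det A ≠ 0`) induces a non-ergodic endomorphism of
the torus `𝕋ⁿ = (ℝ/ℤ)ⁿ`, so that its characteristic polynomial has a root `ζ`
which is a primitive `m`-th root of unity, then no sequence of periodic
measures (uniform measures on periodic orbits) converges weak* to the Haar
measure: for every sequence of periodic points, the orbit averages fail to
converge to the space average for some continuous function. -/
theorem stmt_19 (n : ℕ) (hn : 0 < n) (A : Matrix (Fin n) (Fin n) ℤ)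
    (hdet : A.det ≠ 0)
    (f : (Fin n → AddCircle (1 : ℝ)) → (Fin n → AddCircle (1 : ℝ)))
    (hf : f = fun x i => ∑ j : Fin n, A i j • x j)
    (hnerg : ¬ Ergodic f volume)
    (ζ : ℂ) (m : ℕ) (hm : 0 < m) (hζ : IsPrimitiveRoot ζ m)
    (hroot : (A.charpoly.map (Int.castRingHom ℂ)).IsRoot ζ) :
    ∀ (x : ℕ → (Fin n → AddCircle (1 : ℝ))) (T : ℕ → ℕ),
      (∀ k, 0 < T k) → (∀ k, f^[T k] (x k) = x k) →
      ¬ (∀ g : C((Fin n → AddCircle (1 : ℝ)), ℝ),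
          Tendsto (fun k => (∑ i ∈ Finset.range (T k), g (f^[i] (x k))) / (T k))
            atTop (nhds (∫ y, g y ∂volume))) := by
  intro x T hTpos _hfix H
  classical
  obtain ⟨w, hw0, hwA⟩ := S19.exists_w A ζ m hζ hroot
  set N : ℕ := 3 * m with hN
  have hvec : ∀ (z : ℤ) (j : ℕ), Matrix.vecMul (z • w) (A ^ (m * j)) = z • w := by
    intro z j
    induction j with
    | zero => simp
    | succ j ih =>
      rw [Nat.mul_succ, pow_add, ← Matrix.vecMul_vecMul, ih, Matrix.smul_vecMul, hwA]
  set S : ℕ → ℤ → ℂ := fun k z =>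
    (∑ i ∈ Finset.range (T k), S19.chi (z • w) (f^[i] (x k))) / ((T k : ℝ) : ℂ) with hS
  have hTne : ∀ k, ((T k : ℝ) : ℂ) ≠ 0 := by
    intro k
    exact_mod_cast (Nat.cast_ne_zero (R := ℝ)).2 (hTpos k).ne'
  have hS1 : ∀ k, S k 0 = 1 := by
    intro k
    simp only [hS, zero_smul, S19.chi_zero, Finset.sum_const, Finset.card_range, nsmul_eq_mul,
      mul_one]
    rw [div_eq_one_iff_eq (hTne k)]
    push_cast
    ring
  -- tendsto of S
  have hS0 : ∀ z : ℤ, z ≠ 0 → Tendsto (fun k => S k z) atTop (nhds 0) := by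
    intro z hz
    have hc : z • w ≠ 0 := by
      intro h
      obtain ⟨j, hj⟩ := Function.ne_iff.1 hw0
      have h2 := congrFun h j
      simp only [Pi.smul_apply, smul_eq_mul, Pi.zero_apply, mul_eq_zero] at h2
      tauto
    set gRe : C((Fin n → AddCircle (1:ℝ)), ℝ) :=
      ⟨fun y => (S19.chi (z • w) y).re, Complex.continuous_re.comp (S19.continuous_chi _)⟩ with hgRe
    set gIm : C((Fin n → AddCircle (1:ℝ)), ℝ) :=
      ⟨fun y => (S19.chi (z • w) y).im, Complex.continuous_im.comp (S19.continuous_chi _)⟩ with hgIm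
    have hintRe : (∫ y, gRe y ∂volume) = 0 := by
      have h1 : ∫ y : Fin n → AddCircle (1:ℝ), (S19.chi (z • w) y).re ∂volume
          = (∫ y : Fin n → AddCircle (1:ℝ), S19.chi (z • w) y ∂volume).re := by
        simpa using integral_re (S19.integrable_chi (z • w))
      simp only [hgRe, ContinuousMap.coe_mk]
      rw [h1, S19.integral_chi hc, Complex.zero_re]
    have hintIm : (∫ y, gIm y ∂volume) = 0 := by
      have h1 : ∫ y : Fin n → AddCircle (1:ℝ), (S19.chi (z • w) y).im ∂volume
          = (∫ y : Fin n → AddCircle (1:ℝ), S19.chi (z • w) y ∂volume).im := by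
        simpa using integral_im (S19.integrable_chi (z • w))
      simp only [hgIm, ContinuousMap.coe_mk]
      rw [h1, S19.integral_chi hc, Complex.zero_im]
    have hRe := H gRe
    rw [hintRe] at hRe
    have hIm := H gIm
    rw [hintIm] at hIm
    have hEq : ∀ k, S k z =
        ((((∑ i ∈ Finset.range (T k), gRe (f^[i] (x k))) / (T k : ℝ)) : ℝ) : ℂ)
        + ((((∑ i ∈ Finset.range (T k), gIm (f^[i] (x k))) / (T k : ℝ)) : ℝ) : ℂ) * Complex.I := by
      intro k
      apply Complex.ext
      · simp [hS, hgRe, Complex.div_ofReal_re, Complex.re_sum]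
      · simp [hS, hgIm, Complex.div_ofReal_im, Complex.im_sum]
    have t1 := (Complex.continuous_ofReal.tendsto 0).comp hRe
    have t2 := ((Complex.continuous_ofReal.tendsto 0).comp hIm).mul_const Complex.I
    have t3 := t1.add t2
    simp only [Function.comp_def, Complex.ofReal_zero, zero_mul, add_zero] at t3
    exact t3.congr fun k => (hEq k).symm
  -- the Fejér-type quantity
  set D : ℕ → ℕ → ℂ := fun k i => ∑ d ∈ Finset.range N,
    S19.chi ((d : ℤ) • w) (f^[i] (x k)) * (starRingEnd ℂ) (S19.chi ((d : ℤ) • w) (x k)) with hD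
  set Q : ℕ → ℝ := fun k => (∑ i ∈ Finset.range (T k), Complex.normSq (D k i)) / (T k : ℝ)
    with hQ
  have hDsq : ∀ k i, (Complex.normSq (D k i) : ℂ)
      = ∑ d ∈ Finset.range N, ∑ d' ∈ Finset.range N,
          S19.chi (((d : ℤ) - (d' : ℤ)) • w) (f^[i] (x k)) *
            (starRingEnd ℂ) (S19.chi (((d : ℤ) - (d' : ℤ)) • w) (x k)) := by
    intro k i
    rw [← Complex.mul_conj]
    simp only [hD]
    rw [map_sum, Finset.sum_mul_sum]
    exact Finset.sum_congr rfl fun d _ => Finset.sum_congr rfl fun d' _ =>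
      S19.chi_term w (d : ℤ) (d' : ℤ) _ _
  have hQC : ∀ k, (Q k : ℂ) = ∑ d ∈ Finset.range N, ∑ d' ∈ Finset.range N,
      (starRingEnd ℂ) (S19.chi (((d : ℤ) - (d' : ℤ)) • w) (x k)) * S k ((d : ℤ) - (d' : ℤ)) := by
    intro k
    have h1 : (Q k : ℂ)
        = (∑ i ∈ Finset.range (T k), (Complex.normSq (D k i) : ℂ)) / ((T k : ℝ) : ℂ) := by
      rw [hQ]
      push_cast
      ring
    rw [h1]
    simp_rw [hDsq k]
    rw [Finset.sum_comm]
    rw [Finset.sum_div]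
    refine Finset.sum_congr rfl fun d _ => ?_
    rw [Finset.sum_comm, Finset.sum_div]
    refine Finset.sum_congr rfl fun d' _ => ?_
    rw [hS]
    rw [← Finset.sum_mul, mul_comm, mul_div_assoc]
  set Ek : ℕ → ℝ := fun k => ∑ d ∈ Finset.range N, ∑ d' ∈ Finset.range N,
      (if d = d' then 0 else ‖S k ((d : ℤ) - (d' : ℤ))‖) with hEk
  have hupper : ∀ k, Q k ≤ N + Ek k := by
    intro k
    have h0 : Q k ≤ ‖(Q k : ℂ)‖ := by rw [Complex.norm_real]; exact le_abs_self _
    have h1 : ‖(Q k : ℂ)‖ ≤ ∑ d ∈ Finset.range N, ∑ d' ∈ Finset.range N,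
        ‖S k ((d : ℤ) - (d' : ℤ))‖ := by
      rw [hQC k]
      refine (norm_sum_le _ _).trans (Finset.sum_le_sum fun d _ =>
        (norm_sum_le _ _).trans (Finset.sum_le_sum fun d' _ => ?_))
      rw [norm_mul, RCLike.norm_conj, S19.norm_chi, one_mul]
    have h2 : ∑ d ∈ Finset.range N, ∑ d' ∈ Finset.range N, ‖S k ((d : ℤ) - (d' : ℤ))‖
        ≤ N + Ek k := by
      have hterm : ∀ d d' : ℕ, ‖S k ((d : ℤ) - (d' : ℤ))‖
          ≤ (if d = d' then (1:ℝ) else 0) + (if d = d' then 0 else ‖S k ((d : ℤ) - (d' : ℤ))‖) := by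
        intro d d'
        by_cases h : d = d'
        · subst h
          simp [hS1 k]
        · simp [h]
      calc ∑ d ∈ Finset.range N, ∑ d' ∈ Finset.range N, ‖S k ((d : ℤ) - (d' : ℤ))‖
          ≤ ∑ d ∈ Finset.range N, ∑ d' ∈ Finset.range N,
            ((if d = d' then (1:ℝ) else 0) +
              (if d = d' then 0 else ‖S k ((d : ℤ) - (d' : ℤ))‖)) :=
            Finset.sum_le_sum fun d _ => Finset.sum_le_sum fun d' _ => hterm d d'
        _ = (∑ d ∈ Finset.range N, ∑ d' ∈ Finset.range N, (if d = d' then (1:ℝ) else 0)) + Ek k := by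
            rw [hEk]
            rw [← Finset.sum_add_distrib]
            exact Finset.sum_congr rfl fun d _ => Finset.sum_add_distrib
        _ = N + Ek k := by
            congr 1
            have : ∀ d ∈ Finset.range N, (∑ d' ∈ Finset.range N, if d = d' then (1:ℝ) else 0)
                = 1 := by
              intro d hd
              rw [Finset.sum_ite_eq]
              simp [hd]
            rw [Finset.sum_congr rfl this, Finset.sum_const, Finset.card_range, nsmul_eq_mul,
              mul_one]
    linarith [h0.trans h1]
  have hlower : ∀ k, (N : ℝ)^2 / m ≤ Q k := by
    intro k
    have hDm : ∀ j, D k (m * j) = N := by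
      intro j
      simp only [hD]
      have hterm : ∀ d ∈ Finset.range N,
          S19.chi ((d : ℤ) • w) (f^[m * j] (x k)) *
            (starRingEnd ℂ) (S19.chi ((d : ℤ) • w) (x k)) = 1 := by
        intro d _
        rw [S19.chi_iter A f hf, hvec, Complex.mul_conj, S19.normSq_chi, Complex.ofReal_one]
      rw [Finset.sum_congr rfl hterm, Finset.sum_const, Finset.card_range, nsmul_eq_mul, mul_one]
    set cT := (T k - 1) / m + 1 with hcT
    have hdm := Nat.div_add_mod (T k - 1) m
    have hmod := Nat.mod_lt (T k - 1) hm
    have himg : ∀ j ∈ Finset.range cT, m * j ∈ Finset.range (T k) := by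
      intro j hj
      rw [Finset.mem_range] at *
      have hj' : j ≤ (T k - 1) / m := Nat.lt_succ_iff.mp hj
      have h3 : m * j ≤ m * ((T k - 1) / m) := Nat.mul_le_mul_left _ hj'
      have h4 := hTpos k
      omega
    have hinj : Set.InjOn (fun j => m * j) (Finset.range cT) := fun a _ b _ h =>
      Nat.eq_of_mul_eq_mul_left hm h
    have hsum : (cT : ℝ) * (N : ℝ)^2 ≤ ∑ i ∈ Finset.range (T k), Complex.normSq (D k i) := by
      have h5 : ∑ j ∈ Finset.range cT, Complex.normSq (D k (m * j))
          ≤ ∑ i ∈ Finset.range (T k), Complex.normSq (D k i) := by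
        have hsub : (Finset.range cT).image (fun j => m * j) ⊆ Finset.range (T k) := by
          intro i hi
          rw [Finset.mem_image] at hi
          obtain ⟨j, hj, rfl⟩ := hi
          exact himg j hj
        have h9 := Finset.sum_le_sum_of_subset_of_nonneg hsub
          (fun i _ _ => Complex.normSq_nonneg (D k i))
        rwa [Finset.sum_image (fun a _ b _ h => Nat.eq_of_mul_eq_mul_left hm h)] at h9
      have h6 : ∑ j ∈ Finset.range cT, Complex.normSq (D k (m * j)) = (cT : ℝ) * (N : ℝ)^2 := by
        have : ∀ j ∈ Finset.range cT, Complex.normSq (D k (m * j)) = (N : ℝ)^2 := by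
          intro j _
          rw [hDm j]
          rw [show ((N : ℕ) : ℂ) = (((N : ℕ) : ℝ) : ℂ) by push_cast; ring, Complex.normSq_ofReal]
          ring
        rw [Finset.sum_congr rfl this, Finset.sum_const, Finset.card_range, nsmul_eq_mul]
      linarith [h6 ▸ h5]
    have hTle : (T k : ℝ) ≤ (cT : ℝ) * m := by
      have h7 : T k ≤ cT * m := by
        have hq : cT * m = m * ((T k - 1) / m) + m := by rw [hcT]; ring
        have h4 := hTpos k
        omega
      exact_mod_cast h7
    have hTpos' : (0 : ℝ) < T k := by exact_mod_cast hTpos k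
    have hmpos : (0 : ℝ) < m := by exact_mod_cast hm
    rw [hQ]
    rw [div_le_div_iff₀ hmpos hTpos']
    have hcTpos : (0 : ℝ) ≤ (cT : ℝ) := Nat.cast_nonneg _
    nlinarith [hsum, hTle, sq_nonneg (N : ℝ)]
  have hE0 : Tendsto Ek atTop (nhds 0) := by
    have h8 : Tendsto (fun k => ∑ d ∈ Finset.range N, ∑ d' ∈ Finset.range N,
        (if d = d' then (0:ℝ) else ‖S k ((d : ℤ) - (d' : ℤ))‖)) atTop
        (nhds (∑ d ∈ Finset.range N, ∑ d' ∈ Finset.range N, (0 : ℝ))) := by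
      refine tendsto_finset_sum _ fun d _ => tendsto_finset_sum _ fun d' _ => ?_
      by_cases h : d = d'
      · simp only [h, if_pos rfl]
        exact tendsto_const_nhds
      · simp only [if_neg h]
        have hz : (d : ℤ) - (d' : ℤ) ≠ 0 := by
          simp only [sub_ne_zero]
          exact_mod_cast h
        simpa using (hS0 _ hz).norm
    simpa using h8
  have hev : ∀ᶠ k in atTop, Ek k < 1 := by
    have := hE0.eventually (eventually_lt_nhds one_pos)
    exact this
  obtain ⟨k, hk⟩ := hev.exists
  have h1 := hlower k
  have h2 := hupper k
  have hm' : (1 : ℝ) ≤ m := by exact_mod_cast hm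
  have hNval : (N : ℝ) = 3 * m := by rw [hN]; push_cast; ring
  have hQval : (N : ℝ)^2 / m = 9 * m := by
    rw [hNval]
    field_simp
    ring
  rw [hQval] at h1
  rw [hNval] at h2
  linarith
end
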